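/- arXiv:1109.3220 — 5 statements merged into one kernel-verified Lean document; each statement's English description precedes it below -/
import Mathlib

section
/- Let X = (X_t)_{t≥0} be a Lévy process in a metrizable compact group G, and for t ≥ 0 let S_t be the support of the distribution of X₀⁻¹X_t. Then the closure of ⋃_{t≥0} S_t is a (closed) subgroup of G. -/
open MeasureTheory ProbabilityTheory Filter Topology

noncomputable section

/-- The support of a Borel (probability) measure: the smallest closed set of full measure,
realized as the intersection of all closed sets of full measure. -/
def measSupport {G : Type*} [TopologicalSpace G] [MeasurableSpace G]
    (μ : Measure G) : Set G :=
  ⋂₀ {F : Set G | IsClosed F ∧ μ F = 1}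

/-- A measurable function `γ : [0,∞) → G` is continuously uniformly distributed (c.u.d.)
with respect to the probability measure `μ` on `G` if, for every continuous `φ : G → ℂ`,
`(1/T) ∫₀^T φ(γ(t)) dt → ∫_G φ dμ` as `T → +∞`. -/
def IsCUD {G : Type*} [TopologicalSpace G] [MeasurableSpace G]
    (μ : Measure G) (γ : ℝ → G) : Prop :=
  ∀ φ : C(G, ℂ),
    Tendsto (fun T : ℝ => (1 / T) • ∫ t in Set.Ioc (0 : ℝ) T, φ (γ t)) atTop
      (nhds (∫ g, φ g ∂μ))

/-- A Lévy process in a (metrizable compact) group `G`: a family `X = (X_t)_{t ≥ 0}` of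
`G`-valued random variables with stationary, independent increments and almost surely
right-continuous paths with left limits on `[0,∞)`. -/
structure IsLevyProcess {Ω G : Type*} [MeasurableSpace Ω]
    [TopologicalSpace G] [Group G] [MeasurableSpace G]
    (P : Measure Ω) (X : ℝ → Ω → G) : Prop where
  measurable : ∀ t : ℝ, 0 ≤ t → Measurable (X t)
  stationary : ∀ t₁ t₂ : ℝ, 0 ≤ t₁ → t₁ < t₂ →
    P.map (fun ω => (X t₁ ω)⁻¹ * X t₂ ω) = P.map (fun ω => (X 0 ω)⁻¹ * X (t₂ - t₁) ω)
  indep : ∀ (n : ℕ) (t : Fin (n + 1) → ℝ), 0 ≤ t 0 → StrictMono t →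
    iIndepFun (m := fun _ => ‹MeasurableSpace G›)
      (fun i : Fin (n + 1) =>
        Fin.cases (fun ω => X (t 0) ω)
          (fun j (ω : Ω) => (X (t j.castSucc) ω)⁻¹ * X (t j.succ) ω) i) P
  rcll : ∀ᵐ ω ∂P, ∀ t : ℝ, 0 ≤ t →
    Tendsto (fun s => X s ω) (nhdsWithin t (Set.Ioi t)) (nhds (X t ω)) ∧
    (0 < t → ∃ l, Tendsto (fun s => X s ω) (nhdsWithin t (Set.Ico 0 t)) (nhds l))

lemma mem_measSupport_iff {G : Type*} [TopologicalSpace G] [MeasurableSpace G]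
    [OpensMeasurableSpace G] (μ : Measure G) [IsProbabilityMeasure μ] {x : G} :
    x ∈ measSupport μ ↔ ∀ U : Set G, IsOpen U → x ∈ U → μ U ≠ 0 := by
  constructor
  · intro hx U hU hxU h0
    have hmem : Uᶜ ∈ {F : Set G | IsClosed F ∧ μ F = 1} :=
      ⟨hU.isClosed_compl, (prob_compl_eq_one_iff hU.measurableSet).2 h0⟩
    exact (hx _ hmem) hxU
  · intro h F hF
    obtain ⟨hFc, hF1⟩ := hF
    by_contra hxF
    exact h Fᶜ hFc.isOpen_compl hxF
      ((prob_compl_eq_zero_iff hFc.measurableSet).2 hF1)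

/-- For every Lévy process in a metrizable compact group `G`, the closure of the union of
the supports `S_t` of the distributions of the increments `X₀⁻¹ X_t`, `t ≥ 0`, is a
(closed) subgroup of `G`. -/
theorem levy_closure_union_supports_subgroup
    {Ω G : Type*} [MeasurableSpace Ω]
    [TopologicalSpace G] [Group G] [IsTopologicalGroup G]
    [CompactSpace G] [TopologicalSpace.MetrizableSpace G] [MeasurableSpace G] [BorelSpace G]
    (P : Measure Ω) [IsProbabilityMeasure P]
    (X : ℝ → Ω → G) (hX : IsLevyProcess P X)
    (S : ℝ → Set G)
    (hS : ∀ t : ℝ, 0 ≤ t → S t = measSupport (P.map fun ω => (X 0 ω)⁻¹ * X t ω)) :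
    ∃ H : Subgroup G, (H : Set G) = closure (⋃ t ∈ Set.Ici (0 : ℝ), S t) := by
  haveI : SecondCountableTopology G := by
    letI : MetricSpace G := TopologicalSpace.metrizableSpaceMetric G
    infer_instance
  haveI : T2Space G := by
    letI : MetricSpace G := TopologicalSpace.metrizableSpaceMetric G
    infer_instance
  set U : Set G := ⋃ t ∈ Set.Ici (0 : ℝ), S t with hU
  -- measurability of increments
  have hmeas : ∀ a b : ℝ, 0 ≤ a → 0 ≤ b → Measurable (fun ω => (X a ω)⁻¹ * X b ω) :=
    fun a b ha hb => ((hX.measurable a ha).inv).mul (hX.measurable b hb)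
  have hprob : ∀ t : ℝ, 0 ≤ t →
      IsProbabilityMeasure (P.map fun ω => (X 0 ω)⁻¹ * X t ω) :=
    fun t ht => Measure.isProbabilityMeasure_map (hmeas 0 t le_rfl ht).aemeasurable
  -- S 0 = {1}
  have hfun0 : (fun ω => (X 0 ω)⁻¹ * X 0 ω) = fun _ => (1 : G) :=
    funext fun ω => inv_mul_cancel _
  have hS0 : S 0 = {1} := by
    rw [hS 0 le_rfl, hfun0]
    have hmap : P.map (fun _ : Ω => (1 : G)) = Measure.dirac 1 := by
      rw [Measure.map_const, measure_univ, one_smul]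
    rw [hmap]
    apply subset_antisymm
    · intro x hx
      exact hx {1} ⟨isClosed_singleton, by simp⟩
    · intro x hx
      rcases hx with rfl
      intro F hF
      have h1 : Measure.dirac (1 : G) F = 1 := hF.2
      by_contra hnot
      rw [Measure.dirac_apply' _ hF.1.measurableSet] at h1
      simp [Set.indicator_of_notMem hnot] at h1
  -- S is multiplicative
  have hmul : ∀ s t : ℝ, 0 ≤ s → 0 ≤ t → ∀ a ∈ S s, ∀ b ∈ S t, a * b ∈ S (s + t) := by
    intro s t hs ht a ha b hb
    rcases eq_or_lt_of_le hs with rfl | hs'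
    · rw [hS0] at ha; rcases ha with rfl; simpa using hb
    rcases eq_or_lt_of_le ht with rfl | ht'
    · rw [hS0] at hb; rcases hb with rfl; simpa using ha
    have hst : 0 ≤ s + t := by linarith
    haveI := hprob s hs
    haveI := hprob t ht
    haveI := hprob (s + t) hst
    rw [hS s hs, mem_measSupport_iff] at ha
    rw [hS t ht, mem_measSupport_iff] at hb
    rw [hS (s + t) hst, mem_measSupport_iff]
    intro Uo hUo hxUo
    -- find product neighborhoods
    have hcont : (fun p : G × G => p.1 * p.2) ⁻¹' Uo ∈ 𝓝 (a, b) :=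
      (continuous_mul.continuousAt).preimage_mem_nhds (hUo.mem_nhds hxUo)
    rcases mem_nhds_prod_iff'.1 hcont with ⟨V, W, hV, haV, hW, hbW, hVW⟩
    -- independence of the two increments
    set τ : Fin 3 → ℝ := ![0, s, s + t] with hτ
    have hsm : StrictMono τ := by
      rw [Fin.strictMono_iff_lt_succ]
      intro i
      fin_cases i <;> simp [hτ] <;> linarith
    have h0 : 0 ≤ τ 0 := by simp [hτ]
    have hind := hX.indep 2 τ h0 hsm
    set A : Ω → G := fun ω => (X 0 ω)⁻¹ * X s ω with hA
    set B : Ω → G := fun ω => (X s ω)⁻¹ * X (s + t) ω with hB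
    have hAB : IndepFun A B P := by
      have h12 := hind.indepFun (i := 1) (j := 2) (by decide)
      have e1 : (fun i : Fin 3 =>
          Fin.cases (fun ω => X (τ 0) ω)
            (fun j (ω : Ω) => (X (τ j.castSucc) ω)⁻¹ * X (τ j.succ) ω) i) 1 = A := by
        show (fun ω : Ω => (X (τ (0 : Fin 2).castSucc) ω)⁻¹ * X (τ (0 : Fin 2).succ) ω) = A
        funext ω
        simp [hA, hτ]
      have e2 : (fun i : Fin 3 =>
          Fin.cases (fun ω => X (τ 0) ω)
            (fun j (ω : Ω) => (X (τ j.castSucc) ω)⁻¹ * X (τ j.succ) ω) i) 2 = B := by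
        show (fun ω : Ω => (X (τ (1 : Fin 2).castSucc) ω)⁻¹ * X (τ (1 : Fin 2).succ) ω) = B
        funext ω
        simp [hB, hτ]
      simp only [e1, e2] at h12
      exact h12
    have hkey : P (A ⁻¹' V ∩ B ⁻¹' W) = P (A ⁻¹' V) * P (B ⁻¹' W) :=
      hAB.measure_inter_preimage_eq_mul V W hV.measurableSet hW.measurableSet
    have hPA : P (A ⁻¹' V) ≠ 0 := by
      have := ha V hV haV
      rwa [Measure.map_apply (hmeas 0 s le_rfl hs) hV.measurableSet] at this
    have hPB : P (B ⁻¹' W) ≠ 0 := by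
      have hstat := hX.stationary s (s + t) hs (by linarith)
      have hsub : s + t - s = t := by ring
      rw [hsub] at hstat
      have := hb W hW hbW
      rw [← hstat, Measure.map_apply (hmeas s (s + t) hs hst) hW.measurableSet] at this
      exact this
    have hsubset : A ⁻¹' V ∩ B ⁻¹' W ⊆ (fun ω => (X 0 ω)⁻¹ * X (s + t) ω) ⁻¹' Uo := by
      intro ω ⟨h1, h2⟩
      have h3 : (A ω, B ω) ∈ V ×ˢ W := ⟨h1, h2⟩
      have h4 := hVW h3
      simp only [Set.mem_preimage] at h4 ⊢
      have : A ω * B ω = (X 0 ω)⁻¹ * X (s + t) ω := by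
        simp [hA, hB, mul_assoc]
      rwa [this] at h4
    rw [Measure.map_apply (hmeas 0 (s + t) le_rfl hst) hUo.measurableSet]
    intro hzero
    have : P (A ⁻¹' V ∩ B ⁻¹' W) = 0 :=
      le_antisymm (hzero ▸ measure_mono hsubset) (zero_le)
    rw [hkey] at this
    rcases mul_eq_zero.1 this with h | h
    exacts [hPA h, hPB h]
  -- U is a multiplicative set containing 1
  have hU1 : (1 : G) ∈ U :=
    Set.mem_biUnion (Set.mem_Ici.2 le_rfl) (hS0 ▸ rfl)
  have hUmul : ∀ x ∈ U, ∀ y ∈ U, x * y ∈ U := by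
    intro x hx y hy
    rcases Set.mem_iUnion₂.1 hx with ⟨s, hs, hxs⟩
    rcases Set.mem_iUnion₂.1 hy with ⟨t, ht, hyt⟩
    exact Set.mem_biUnion (Set.mem_Ici.2 (by
      have := Set.mem_Ici.1 hs; have := Set.mem_Ici.1 ht; linarith))
      (hmul s t (Set.mem_Ici.1 hs) (Set.mem_Ici.1 ht) x hxs y hyt)
  -- closure U is a submonoid, hence
  have hclosure_mul : ∀ x ∈ closure U, ∀ y ∈ closure U, x * y ∈ closure U := by
    intro x hx y hy
    exact map_mem_closure₂ continuous_mul hx hy hUmul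
  have hsubmem : (Submonoid.closure U : Set G) ⊆ closure U := by
    intro x hx
    induction hx using Submonoid.closure_induction with
    | mem y hy => exact subset_closure hy
    | one => exact subset_closure hU1
    | mul y z _ _ hy hz => exact hclosure_mul y hy z hz
  have heq : closure (Submonoid.closure U : Set G) = closure U :=
    subset_antisymm (closure_minimal hsubmem isClosed_closure)
      (closure_mono Submonoid.subset_closure)
  refine ⟨(Subgroup.closure U).topologicalClosure, ?_⟩
  have := closure_submonoidClosure_eq_closure_subgroupClosure (G := G) U
  calc ((Subgroup.closure U).topologicalClosure : Set G)
      = closure ((Subgroup.closure U : Set G)) := rfl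
    _ = closure (Submonoid.closure U : Set G) := this.symm
    _ = closure U := heq
end
end

section
/- Let G be a metrizable compact group with normalized Haar measure λ_G, let H₀ be a dense subset of G, and let B be a Borel subset of G such that λ_G(Bh △ B) = 0 for every h ∈ H₀ (where △ denotes symmetric difference and Bh = {bh : b ∈ B}). Then λ_G(B) ∈ {0, 1}. -/
open MeasureTheory Filter Topology
open scoped symmDiff ENNReal

/-- Let `G` be a metrizable compact group with normalized Haar measure `μG`, let `H₀` be a
dense subset of `G`, and let `B` be a Borel set with `μG (Bh ∆ B) = 0` for every `h ∈ H₀`,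
where `Bh = {bh : b ∈ B}`. Then `μG B ∈ {0, 1}`. -/
theorem haar_zero_one_law_of_dense_translations
    {G : Type*} [Group G] [TopologicalSpace G] [IsTopologicalGroup G]
    [CompactSpace G] [TopologicalSpace.MetrizableSpace G] [MeasurableSpace G] [BorelSpace G]
    (μG : Measure G) [μG.IsHaarMeasure] [IsProbabilityMeasure μG]
    (H₀ : Set G) (hH₀ : Dense H₀)
    (B : Set G) (hB : MeasurableSet B)
    (hinv : ∀ h ∈ H₀, μG (((fun b => b * h) '' B) ∆ B) = 0) :
    μG B = 0 ∨ μG B = 1 := by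
  letI := TopologicalSpace.metrizableSpaceMetric G
  -- Haar measure on a compact group is right invariant
  have hright : ∀ g : G, MeasurePreserving (fun x : G => x * g) μG μG := by
    intro g
    refine ⟨(measurable_mul_const g), ?_⟩
    haveI : IsProbabilityMeasure (μG.map (· * g)) :=
      Measure.isProbabilityMeasure_map (measurable_mul_const g).aemeasurable
    exact Measure.isHaarMeasure_eq_of_isProbabilityMeasure (μG.map (· * g)) μG
  -- the family of right translations x ↦ x * h⁻¹, continuous in h
  set f : G → C(G, G) := fun h => ⟨fun x => x * h⁻¹, by continuity⟩ with hf
  have hfc : Continuous f :=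
    ContinuousMap.continuous_of_continuous_uncurry f (continuous_snd.mul continuous_fst.inv)
  have himg : ∀ h : G, (fun b => b * h) '' B = f h ⁻¹' B := by
    intro h
    ext x
    constructor
    · rintro ⟨b, hb, rfl⟩
      show b * h * h⁻¹ ∈ B
      simpa using hb
    · intro hx
      exact ⟨x * h⁻¹, hx, by simp⟩
  -- the set of h for which B * h =ᵐ B is closed; by density it is everything
  have hclosed : IsClosed {h : G | f h ⁻¹' B =ᵐ[μG] B} :=
    isClosed_setOf_preimage_ae_eq hfc (fun h => hright h⁻¹) B hB.nullMeasurableSet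
      (measure_ne_top μG B)
  have hsub : H₀ ⊆ {h : G | f h ⁻¹' B =ᵐ[μG] B} := by
    intro h hh
    have := hinv h hh
    rw [himg h] at this
    exact (measure_symmDiff_eq_zero_iff).1 this
  have hall : ∀ g : G, μG (((fun x : G => x * g) ⁻¹' B) ∆ B) = 0 := by
    intro g
    have : g⁻¹ ∈ {h : G | f h ⁻¹' B =ᵐ[μG] B} := by
      have := hclosed.closure_subset ((hH₀.mono hsub).closure_eq ▸ Set.mem_univ g⁻¹)
      exact this
    have : f g⁻¹ ⁻¹' B =ᵐ[μG] B := this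
    rw [measure_symmDiff_eq_zero_iff]
    simpa [hf] using this
  -- Fubini argument: μG B * μG Bᶜ = 0
  set F : G × G → ℝ≥0∞ := fun p => B.indicator 1 (p.1 * p.2) * Bᶜ.indicator 1 p.1 with hF
  have hFm : Measurable F := by
    apply Measurable.mul
    · exact (measurable_indicator_const_iff (1 : ℝ≥0∞)).2 hB |>.comp measurable_mul
    · exact ((measurable_indicator_const_iff (1 : ℝ≥0∞)).2 hB.compl).comp measurable_fst
  have key : μG B * μG Bᶜ = 0 := by
    have J1 : ∫⁻ x, ∫⁻ g, F (x, g) ∂μG ∂μG = μG B * μG Bᶜ := by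
      have inner : ∀ x : G, ∫⁻ g, F (x, g) ∂μG = μG B * Bᶜ.indicator 1 x := by
        intro x
        simp only [hF]
        have hm : Measurable fun g : G => B.indicator (1 : G → ℝ≥0∞) (x * g) :=
          (measurable_one.indicator hB).comp (measurable_const_mul x)
        rw [lintegral_mul_const _ hm]
        have he : ∫⁻ g, B.indicator (1 : G → ℝ≥0∞) (x * g) ∂μG = μG B := by
          have h2 : ∀ g : G, B.indicator (1 : G → ℝ≥0∞) (x * g)
              = ((fun g : G => x * g) ⁻¹' B).indicator 1 g := by
            intro g; by_cases hg : x * g ∈ B <;> simp [hg, Set.indicator_apply]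
          simp_rw [h2]
          rw [lintegral_indicator_one (hB.preimage (measurable_const_mul x)),
            measure_preimage_mul]
        rw [he, mul_comm]
      simp_rw [inner]
      rw [lintegral_const_mul _ (measurable_one.indicator hB.compl),
        lintegral_indicator_one hB.compl]
    have J2 : ∫⁻ g, ∫⁻ x, F (x, g) ∂μG ∂μG = 0 := by
      have inner : ∀ g : G, ∫⁻ x, F (x, g) ∂μG = μG (((fun x : G => x * g) ⁻¹' B) ∩ Bᶜ) := by
        intro g
        have : ∀ x : G, F (x, g)
            = (((fun x : G => x * g) ⁻¹' B) ∩ Bᶜ).indicator 1 x := by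
          intro x
          by_cases h1 : x * g ∈ B <;> by_cases h2 : x ∈ B <;>
            simp [hF, Set.indicator_apply, h1, h2]
        simp_rw [this]
        exact lintegral_indicator_one ((hB.preimage (measurable_mul_const g)).inter hB.compl)
      simp_rw [inner]
      have bound : ∀ g : G, μG (((fun x : G => x * g) ⁻¹' B) ∩ Bᶜ) = 0 := by
        intro g
        refine measure_mono_null ?_ (hall g)
        intro x hx
        exact Or.inl ⟨hx.1, hx.2⟩
      simp_rw [bound]
      simp
    have swap : ∫⁻ x, ∫⁻ g, F (x, g) ∂μG ∂μG = ∫⁻ g, ∫⁻ x, F (x, g) ∂μG ∂μG :=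
      lintegral_lintegral_swap hFm.aemeasurable
    rw [← J1, swap, J2]
  rcases mul_eq_zero.1 key with h | h
  · exact Or.inl h
  · right
    have := prob_compl_eq_zero_iff hB |>.1 h
    exact this
end

section
/- Let X = (X_t)_{t≥0} be a Lévy process in a metrizable compact group G, and let ξ be a G-valued random variable on the same probability space, independent of X and distributed according to the normalized Haar measure λ_G. Then the process Z = (Z_t)_{t≥0} with Z_t = ξX₀⁻¹X_t is stationary: for every s ≥ 0, every n ∈ ℕ and all 0 ≤ t₁ < … < t_n, the joint distribution of (Z_{s+t₁}, …, Z_{s+t_n}) equals the joint distribution of (Z_{t₁}, …, Z_{t_n}). -/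
open MeasureTheory ProbabilityTheory Filter Topology

noncomputable section
/-! ### Auxiliary lemmas -/

/-- The joint law of a finite independent family is the product of the marginal laws. -/
lemma joint_law_eq_pi {Ω β ι : Type*} [MeasurableSpace Ω] [MeasurableSpace β] [Fintype ι]
    {P : Measure Ω} [IsProbabilityMeasure P] {f : ι → Ω → β}
    (hm : ∀ i, Measurable (f i))
    (h : iIndepFun (m := fun _ => ‹MeasurableSpace β›) f P) :
    P.map (fun ω i => f i ω) = Measure.pi (fun i => P.map (f i)) := by
  haveI : ∀ i, SigmaFinite (P.map (f i)) := fun i => by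
    haveI := Measure.isProbabilityMeasure_map (μ := P) (hm i).aemeasurable
    infer_instance
  refine (Measure.pi_eq fun s hs => ?_).symm
  rw [Measure.map_apply (measurable_pi_lambda _ hm) (MeasurableSet.univ_pi hs)]
  have hpre : (fun ω i => f i ω) ⁻¹' Set.pi Set.univ s = ⋂ i, f i ⁻¹' s i := by
    ext ω; simp [Set.mem_pi]
  rw [hpre, h.meas_iInter fun i => ⟨s i, hs i, rfl⟩]
  exact Finset.prod_congr rfl fun i _ => (Measure.map_apply (hm i) (hs i)).symm

/-- A Haar probability measure on a compact group is right invariant. -/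
lemma haar_isMulRightInvariant {G : Type*} [TopologicalSpace G] [Group G] [IsTopologicalGroup G]
    [CompactSpace G] [MeasurableSpace G] [BorelSpace G]
    (μ : Measure G) [μ.IsHaarMeasure] [IsProbabilityMeasure μ] :
    μ.IsMulRightInvariant := by
  constructor
  intro g
  haveI : IsProbabilityMeasure (μ.map (· * g)) :=
    Measure.isProbabilityMeasure_map (measurable_mul_const g).aemeasurable
  exact Measure.isHaarMeasure_eq_of_isProbabilityMeasure _ _

/-- Randomization: if the first coordinate is Haar distributed and independent of the second,
then multiplying the first coordinate by a function of the second leaves the joint law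
a product, with the same Haar first marginal. -/
lemma haar_rand {G : Type*} [TopologicalSpace G] [Group G] [IsTopologicalGroup G]
    [SecondCountableTopology G] [MeasurableSpace G] [BorelSpace G]
    (μ : Measure G) [IsProbabilityMeasure μ] [μ.IsMulRightInvariant]
    {α β : Type*} [MeasurableSpace α] [MeasurableSpace β]
    (ρ : Measure α) [IsProbabilityMeasure ρ]
    {w : α → G} {v : α → β} (hw : Measurable w) (hv : Measurable v) :
    (μ.prod ρ).map (fun p => (p.1 * w p.2, v p.2)) = μ.prod (ρ.map v) := by
  haveI : IsProbabilityMeasure (ρ.map v) := Measure.isProbabilityMeasure_map (μ := ρ) hv.aemeasurable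
  have hΦ : Measurable (fun p : G × α => (p.1 * w p.2, v p.2)) :=
    (measurable_fst.mul (hw.comp measurable_snd)).prodMk (hv.comp measurable_snd)
  refine (Measure.prod_eq fun A B hA hB => ?_).symm
  rw [Measure.map_apply hΦ (hA.prod hB),
    Measure.prod_apply_symm (hΦ (hA.prod hB))]
  have hfib : ∀ y : α,
      μ ((fun x => (x, y)) ⁻¹' ((fun p : G × α => (p.1 * w p.2, v p.2)) ⁻¹' A ×ˢ B))
        = Set.indicator (v ⁻¹' B) (fun _ => μ A) y := by
    intro y
    by_cases h : v y ∈ B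
    · have hset : ((fun x : G => (x, y)) ⁻¹'
          ((fun p : G × α => (p.1 * w p.2, v p.2)) ⁻¹' A ×ˢ B)) = (fun x : G => x * w y) ⁻¹' A := by
        ext x; simp [h]
      rw [hset, measure_preimage_mul_right]
      simp [h]
    · have hset : ((fun x : G => (x, y)) ⁻¹'
          ((fun p : G × α => (p.1 * w p.2, v p.2)) ⁻¹' A ×ˢ B)) = ∅ := by
        ext x; simp [h]
      rw [hset]
      simp [h]
  simp_rw [hfib]
  rw [lintegral_indicator_const (hv hB), Measure.map_apply hv hB]

/-- Telescoping product of successive increments. -/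
lemma telescope_prod {G : Type*} [Group G] {m : ℕ} (a : Fin (m + 1) → G) :
    ∀ (k : ℕ) (hk : k ≤ m),
      ((List.ofFn (fun j : Fin m => (a j.castSucc)⁻¹ * a j.succ)).take k).prod
        = (a 0)⁻¹ * a ⟨k, Nat.lt_succ_of_le hk⟩
  | 0, hk => by simp
  | (k + 1), hk => by
    have hk' : k < m := hk
    rw [List.prod_take_succ _ k (by simpa using hk'), telescope_prod a k hk'.le]
    have hget : (List.ofFn (fun j : Fin m => (a j.castSucc)⁻¹ * a j.succ))[k]'(by simpa using hk')
        = (a ⟨k, Nat.lt_succ_of_le hk'.le⟩)⁻¹ * a ⟨k + 1, Nat.lt_succ_of_le hk⟩ := by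
      simp [List.getElem_ofFn, Fin.castSucc, Fin.succ, Fin.castAdd, Fin.castLE]
    rw [hget, mul_assoc, mul_inv_cancel_left]

/-- Measurability of the partial products. -/
lemma measurable_take_prod {G : Type*} [Group G] [TopologicalSpace G] [IsTopologicalGroup G]
    [SecondCountableTopology G] [MeasurableSpace G] [BorelSpace G] {m : ℕ} :
    ∀ (k : ℕ), k ≤ m → Measurable (fun y : Fin (m + 1) → G =>
      ((List.ofFn (fun j : Fin m => y j.succ)).take k).prod)
  | 0, _ => by simp only [List.take_zero, List.prod_nil]; exact measurable_const
  | (k + 1), hk => by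
    have hk' : k < m := hk
    have h1 : ∀ y : Fin (m + 1) → G,
        ((List.ofFn (fun j : Fin m => y j.succ)).take (k + 1)).prod
          = ((List.ofFn (fun j : Fin m => y j.succ)).take k).prod * y (Fin.succ ⟨k, hk'⟩) := by
      intro y
      rw [List.prod_take_succ _ k (by simpa using hk')]
      congr 1
      simp [List.getElem_ofFn]
    simp_rw [h1]
    exact (measurable_take_prod k hk'.le).mul (measurable_pi_apply _)

/-- Let `X` be a Lévy process in a metrizable compact group `G`, and let `ξ` be a
`G`-valued random variable, independent of the process `X`, with distribution the
normalized Haar measure `μG`. Then the process `Z_t = ξ X₀⁻¹ X_t` is stationary: for all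
`s ≥ 0`, `n ∈ ℕ` and `0 ≤ t₁ < … < t_n`, the joint law of `(Z_{s+t₁}, …, Z_{s+t_n})`
equals the joint law of `(Z_{t₁}, …, Z_{t_n})`. -/
theorem haar_randomized_levy_is_stationary
    {Ω G : Type*} [MeasurableSpace Ω]
    [TopologicalSpace G] [Group G] [IsTopologicalGroup G]
    [CompactSpace G] [TopologicalSpace.MetrizableSpace G] [MeasurableSpace G] [BorelSpace G]
    (P : Measure Ω) [IsProbabilityMeasure P]
    (μG : Measure G) [μG.IsHaarMeasure] [IsProbabilityMeasure μG]
    (X : ℝ → Ω → G) (hX : IsLevyProcess P X)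
    (ξ : Ω → G) (hξm : Measurable ξ) (hξd : P.map ξ = μG)
    (hξindep : ∀ (n : ℕ) (t : Fin n → ℝ), (∀ i, 0 ≤ t i) →
      IndepFun ξ (fun ω (i : Fin n) => X (t i) ω) P) :
    ∀ s : ℝ, 0 ≤ s → ∀ (n : ℕ) (t : Fin n → ℝ), (∀ i, 0 ≤ t i) → StrictMono t →
      P.map (fun ω (i : Fin n) => ξ ω * (X 0 ω)⁻¹ * X (s + t i) ω) =
        P.map (fun ω (i : Fin n) => ξ ω * (X 0 ω)⁻¹ * X (t i) ω) := by
  letI : MetricSpace G := TopologicalSpace.metrizableSpaceMetric G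
  haveI : SecondCountableTopology G := inferInstance
  haveI : μG.IsMulRightInvariant := haar_isMulRightInvariant μG
  intro s hs n t ht hmono
  obtain _ | m := n
  · have h0 : (fun ω (i : Fin 0) => ξ ω * (X 0 ω)⁻¹ * X (s + t i) ω)
        = fun ω (i : Fin 0) => ξ ω * (X 0 ω)⁻¹ * X (t i) ω := by
      funext ω i; exact i.elim0
    rw [h0]
  · -- the increment marginal laws, independent of the shift `s`
    set ν : Fin (m + 1) → Measure G := fun i =>
      Fin.cases (Measure.dirac (1 : G))
        (fun j => P.map (fun ω => (X 0 ω)⁻¹ * X (t j.succ - t j.castSucc) ω)) i with hν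
    -- partial products map
    set D : (Fin (m + 1) → G) → (Fin (m + 1) → G) := fun y i =>
      ((List.ofFn (fun j : Fin m => y j.succ)).take i).prod with hD
    have hDm : Measurable D :=
      measurable_pi_lambda _ fun i => measurable_take_prod i.val i.is_le
    -- final multiplication map
    set mfun : G × (Fin (m + 1) → G) → (Fin (m + 1) → G) := fun p i => p.1 * p.2 i with hmfun
    have hmfunm : Measurable mfun :=
      measurable_pi_lambda _ fun i => measurable_fst.mul ((measurable_pi_apply i).comp measurable_snd)
    have key : ∀ s' : ℝ, 0 ≤ s' →
        P.map (fun ω (i : Fin (m + 1)) => ξ ω * (X 0 ω)⁻¹ * X (s' + t i) ω)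
          = (μG.prod ((Measure.pi ν).map D)).map mfun := by
      intro s' hs'
      set u : Fin (m + 1) → ℝ := fun i => s' + t i with hu
      have hu0 : ∀ i, 0 ≤ u i := fun i => add_nonneg hs' (ht i)
      have humono : StrictMono u := fun a b hab => by
        simpa [hu] using add_lt_add_left (hmono hab) s'
      set τ : Fin (m + 2) → ℝ := Fin.cons 0 u with hτdef
      have hτ : ∀ i, 0 ≤ τ i := by
        intro i
        refine Fin.cases ?_ ?_ i
        · simp [hτdef]
        · intro j; simpa [hτdef] using hu0 j
      set XV : Ω → Fin (m + 2) → G := fun ω i => X (τ i) ω with hXV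
      have hXVm : Measurable XV := measurable_pi_lambda _ fun i => hX.measurable _ (hτ i)
      haveI : IsProbabilityMeasure (P.map XV) := Measure.isProbabilityMeasure_map (μ := P) hXVm.aemeasurable
      have hindep : IndepFun ξ XV P := hξindep (m + 2) τ hτ
      have hpair : P.map (fun ω => (ξ ω, XV ω)) = μG.prod (P.map XV) := by
        rw [← hξd]
        exact (indepFun_iff_map_prod_eq_prod_map_map hξm.aemeasurable hXVm.aemeasurable).1 hindep
      -- the randomization map
      set w : (Fin (m + 2) → G) → G := fun x => (x 0)⁻¹ * x (Fin.succ 0) with hw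
      set r : (Fin (m + 2) → G) → Fin (m + 1) → G :=
        fun x i => (x (Fin.succ 0))⁻¹ * x i.succ with hr
      have hwm : Measurable w := (measurable_pi_apply _).inv.mul (measurable_pi_apply _)
      have hrm : Measurable r :=
        measurable_pi_lambda _ fun i => (measurable_pi_apply _).inv.mul (measurable_pi_apply _)
      have hΦm : Measurable (fun p : G × (Fin (m + 2) → G) => (p.1 * w p.2, r p.2)) :=
        (measurable_fst.mul (hwm.comp measurable_snd)).prodMk (hrm.comp measurable_snd)
      -- decompose Z as a composition
      have hcomp : (fun ω (i : Fin (m + 1)) => ξ ω * (X 0 ω)⁻¹ * X (s' + t i) ω)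
          = (mfun ∘ (fun p : G × (Fin (m + 2) → G) => (p.1 * w p.2, r p.2)))
              ∘ (fun ω => (ξ ω, XV ω)) := by
        funext ω i
        show ξ ω * (X 0 ω)⁻¹ * X (s' + t i) ω
            = (ξ ω * ((XV ω 0)⁻¹ * XV ω (Fin.succ 0)))
              * ((XV ω (Fin.succ 0))⁻¹ * XV ω i.succ)
        have h0 : XV ω 0 = X 0 ω := by simp [hXV, hτdef]
        have h1 : XV ω i.succ = X (s' + t i) ω := by simp [hXV, hτdef, hu]
        rw [h0, h1]
        group
      rw [hcomp, ← Measure.map_map (hmfunm.comp hΦm) (hξm.prodMk hXVm),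
        ← Measure.map_map hmfunm hΦm, hpair,
        haar_rand μG (P.map XV) hwm hrm]
      -- identify the law of the relative increments
      have hσ : (P.map XV).map r
          = P.map (fun ω (i : Fin (m + 1)) => (X (u 0) ω)⁻¹ * X (u i) ω) := by
        rw [Measure.map_map hrm hXVm]
        have hre : r ∘ XV = fun ω (i : Fin (m + 1)) => (X (u 0) ω)⁻¹ * X (u i) ω := by
          funext ω i
          simp only [Function.comp_apply, hr, hXV, hτdef, Fin.cons_succ]
        rw [hre]
      rw [hσ]
      -- the modified increment family
      set g : Fin (m + 1) → Ω → G := fun i =>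
        Fin.cases (fun _ => (1 : G))
          (fun j ω => (X (u j.castSucc) ω)⁻¹ * X (u j.succ) ω) i with hg
      have hgm : ∀ i, Measurable (g i) := by
        intro i
        refine Fin.cases ?_ ?_ i
        · simpa [hg] using measurable_const
        · intro j
          show Measurable (fun ω => (X (u j.castSucc) ω)⁻¹ * X (u j.succ) ω)
          exact ((hX.measurable _ (hu0 j.castSucc)).inv.mul
            (hX.measurable _ (hu0 j.succ)))
      have hgindep : iIndepFun (m := fun _ => ‹MeasurableSpace G›) g P := by
        have hbase := hX.indep m u (hu0 0) humono
        have hcompind := hbase.comp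
          (fun (i : Fin (m + 1)) (x : G) => if i = 0 then 1 else x)
          (fun i => by
            by_cases h : i = 0 <;> simp [h] <;> exact measurable_id)
        have heq : (fun i : Fin (m + 1) =>
            (fun x : G => if i = 0 then 1 else x)
              ∘ (Fin.cases (fun ω => X (u 0) ω)
                  (fun j (ω : Ω) => (X (u j.castSucc) ω)⁻¹ * X (u j.succ) ω) i)) = g := by
          funext i
          refine Fin.cases ?_ ?_ i
          · funext ω; simp [hg]
          · intro j; funext ω; simp [hg, Fin.succ_ne_zero]
        rwa [heq] at hcompind
      have hlaw : P.map (fun ω i => g i ω) = Measure.pi ν := by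
        rw [joint_law_eq_pi hgm hgindep]
        congr 1
        funext i
        refine Fin.cases ?_ ?_ i
        · rw [hg, hν]
          simp [Measure.map_const]
        · intro j
          rw [hg, hν]
          simp only [Fin.cases_succ]
          rw [hX.stationary (u j.castSucc) (u j.succ) (hu0 _)
            (humono (Fin.castSucc_lt_succ (i := j)))]
          have huu : u j.succ - u j.castSucc = t j.succ - t j.castSucc := by
            simp only [hu]; ring
          rw [huu]
      -- relative increments as partial products
      have hWD : (fun ω (i : Fin (m + 1)) => (X (u 0) ω)⁻¹ * X (u i) ω)
          = D ∘ (fun ω i => g i ω) := by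
        funext ω
        funext i
        show (X (u 0) ω)⁻¹ * X (u i) ω
            = ((List.ofFn (fun j : Fin m => g j.succ ω)).take i).prod
        have hfn : (fun j : Fin m => g j.succ ω)
            = fun j : Fin m => ((fun k : Fin (m + 1) => X (u k) ω) j.castSucc)⁻¹
                * (fun k : Fin (m + 1) => X (u k) ω) j.succ := by
          funext j; simp [hg]
        rw [hfn, telescope_prod (fun k : Fin (m + 1) => X (u k) ω) i.val i.is_le]
      rw [hWD, ← Measure.map_map hDm (measurable_pi_lambda _ hgm), hlaw]
    have h0 := key 0 le_rfl
    simp only [zero_add] at h0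
    rw [key s hs, h0]
end
end

section
/- Let (B_t)_{t≥0} be a standard one-dimensional Brownian motion, i.e., a real-valued stochastic process with B₀ = 0, almost surely continuous paths, independent increments, and B_t − B_s normally distributed with mean 0 and variance t − s for 0 ≤ s < t. Then, with probability one, the path t ↦ ⟨B_t⟩ of its fractional parts is continuously uniformly distributed in 𝕋 = ℝ/ℤ: for every continuous φ : 𝕋 → ℂ, (1/T)∫₀^T φ(⟨B_t⟩) dt → ∫_𝕋 φ dλ_𝕋 as T → +∞, where λ_𝕋 is the normalized Haar measure on 𝕋. -/
open MeasureTheory ProbabilityTheory Filter Topology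

noncomputable section

/-- A standard one-dimensional Brownian motion: `B₀ = 0`, almost surely continuous paths
on `[0,∞)`, independent increments, and `B_t − B_s ~ N(0, t − s)` for `0 ≤ s < t`. -/
structure IsStdBrownianMotion {Ω : Type*} [MeasurableSpace Ω]
    (P : MeasureTheory.Measure Ω) (B : ℝ → Ω → ℝ) : Prop where
  measurable : ∀ t : ℝ, 0 ≤ t → Measurable (B t)
  init : ∀ ω, B 0 ω = 0
  cont : ∀ᵐ ω ∂P, ContinuousOn (fun t => B t ω) (Set.Ici 0)
  indep : ∀ (n : ℕ) (t : Fin (n + 1) → ℝ), 0 ≤ t 0 → StrictMono t →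
    iIndepFun
      (fun (i : Fin n) (ω : Ω) => B (t i.succ) ω - B (t i.castSucc) ω) P
  gauss : ∀ s t : ℝ, 0 ≤ s → s < t →
    P.map (fun ω => B t ω - B s ω) =
      ProbabilityTheory.gaussianReal 0 (Real.toNNReal (t - s))

open Set Complex
open scoped NNReal ENNReal Real

section BMcudAux

lemma gaussian_char (v : ℝ≥0) (u : ℝ) :
    ∫ x : ℝ, Complex.exp (u * x * Complex.I) ∂(gaussianReal 0 v) =
      Complex.exp (-(v : ℝ) * u ^ 2 / 2) := by
  rcases eq_or_ne v 0 with hv | hv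
  · simp [hv, gaussianReal_zero_var]
  · have hv' : (0:ℝ) < (v:ℝ) := lt_of_le_of_ne (v.coe_nonneg) (by exact_mod_cast hv.symm)
    have h2pv : (0:ℝ) < 2 * π * v := by positivity
    set b : ℝ := (-(2 * (v:ℝ)))⁻¹ with hbdef
    have hb : ((b : ℂ)).re < 0 := by
      simp only [Complex.ofReal_re, hbdef, inv_neg]
      simp only [Left.neg_neg_iff]
      positivity
    rw [gaussianReal_of_var_ne_zero _ hv]
    have hpdf : gaussianPDF 0 v = fun x => ((Real.toNNReal (gaussianPDFReal 0 v x)) : ℝ≥0∞) := by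
      ext x; rw [gaussianPDF_def]; rfl
    rw [hpdf, integral_withDensity_eq_integral_smul
      ((measurable_gaussianPDFReal 0 v).real_toNNReal) _]
    have h1 : ∀ x : ℝ, (Real.toNNReal (gaussianPDFReal 0 v x)) • Complex.exp (u * x * Complex.I)
        = ((Real.sqrt (2 * π * v))⁻¹ : ℝ) •
          Complex.exp ((b:ℂ) * (x:ℂ) ^ 2 + (u * Complex.I) * x + 0) := by
      intro x
      rw [NNReal.smul_def, Real.coe_toNNReal _ (gaussianPDFReal_nonneg 0 v x),
        gaussianPDFReal_def]
      simp only [sub_zero, Complex.real_smul, Complex.ofReal_mul]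
      rw [mul_assoc]
      congr 1
      rw [Complex.ofReal_exp, ← Complex.exp_add]
      congr 1
      rw [hbdef]
      push_cast
      have : ((v:ℂ)) ≠ 0 := by exact_mod_cast hv'.ne'
      field_simp
      ring
    simp_rw [h1]
    rw [integral_smul, integral_cexp_quadratic hb (u * Complex.I) 0]
    have hneg : -((b:ℂ)) = (((2 * (v:ℝ))⁻¹ : ℝ) : ℂ) := by
      rw [hbdef]; push_cast; rw [inv_neg]; ring
    rw [hneg]
    have hpow : ((π : ℂ) / (((2 * (v:ℝ))⁻¹ : ℝ) : ℂ)) ^ (1/2 : ℂ) = (Real.sqrt (2 * π * v) : ℂ) := by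
      have h2 : ((π : ℂ) / (((2 * (v:ℝ))⁻¹ : ℝ) : ℂ)) = ((2 * π * v : ℝ) : ℂ) := by
        have hvne : ((v:ℂ)) ≠ 0 := by exact_mod_cast hv'.ne'
        push_cast
        field_simp
      rw [h2, show (1/2 : ℂ) = ((1/2 : ℝ) : ℂ) by norm_num, ← Complex.ofReal_cpow h2pv.le,
        Real.sqrt_eq_rpow]
    rw [hpow]
    have hexp : (0 : ℂ) - (u * Complex.I)^2 / (4 * (b:ℂ)) = ((-(v:ℝ) * u ^ 2 / 2 : ℝ) : ℂ) := by
      rw [hbdef]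
      have : ((v:ℂ)) ≠ 0 := by exact_mod_cast hv'.ne'
      push_cast
      rw [mul_pow, Complex.I_sq]
      field_simp
      ring
    rw [hexp]
    rw [Complex.real_smul, ← mul_assoc, ← Complex.ofReal_mul,
      inv_mul_cancel₀ (Real.sqrt_ne_zero'.mpr h2pv)]
    simp

variable {Ω : Type*} [MeasurableSpace Ω] {P : Measure Ω} [IsProbabilityMeasure P]
  {B : ℝ → Ω → ℝ}

lemma increment_char (hB : IsStdBrownianMotion P B) {s t : ℝ} (hs : 0 ≤ s) (hst : s ≤ t)
    (u : ℝ) :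
    ∫ ω, Complex.exp (u * (B t ω - B s ω : ℝ) * Complex.I) ∂P =
      Complex.exp (((-(t - s) * u ^ 2 / 2 : ℝ) : ℂ)) := by
  rcases eq_or_lt_of_le hst with rfl | h
  · simp [sub_self]
  · have hmap := hB.gauss s t hs h
    have hg : AEMeasurable (fun ω => B t ω - B s ω) P :=
      ((hB.measurable t (hs.trans hst)).sub (hB.measurable s hs)).aemeasurable
    have hf : AEStronglyMeasurable (fun x : ℝ => Complex.exp (u * x * Complex.I))
        (P.map (fun ω => B t ω - B s ω)) :=
      (Complex.continuous_exp.comp (by continuity)).aestronglyMeasurable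
    have := integral_map hg hf
    rw [← this, hmap, gaussian_char]
    norm_cast
    rw [Real.coe_toNNReal _ (by linarith)]

lemma correlation (hB : IsStdBrownianMotion P B) {s t : ℝ} (hs : 0 ≤ s) (ht : 0 ≤ t) (c : ℝ) :
    ∫ ω, Complex.exp (c * B t ω * Complex.I) *
        (starRingEnd ℂ) (Complex.exp (c * B s ω * Complex.I)) ∂P
      = Complex.exp (((-|t - s| * c ^ 2 / 2 : ℝ) : ℂ)) := by
  have key : ∀ x y : ℝ, Complex.exp (c * x * Complex.I) *
      (starRingEnd ℂ) (Complex.exp (c * y * Complex.I))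
      = Complex.exp (c * (x - y : ℝ) * Complex.I) := by
    intro x y
    rw [← Complex.exp_conj, ← Complex.exp_add]
    congr 1
    simp only [map_mul, Complex.conj_I, Complex.conj_ofReal]
    push_cast
    ring
  rcases le_total s t with h | h
  · simp_rw [key]
    rw [increment_char hB hs h c]
    rw [_root_.abs_of_nonneg (by linarith : (0:ℝ) ≤ t - s)]
  · have flip : ∀ ω, Complex.exp (c * B t ω * Complex.I) *
        (starRingEnd ℂ) (Complex.exp (c * B s ω * Complex.I))
        = (starRingEnd ℂ) (Complex.exp (c * B s ω * Complex.I) *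
            (starRingEnd ℂ) (Complex.exp (c * B t ω * Complex.I))) := by
      intro ω; rw [map_mul, Complex.conj_conj]; ring
    simp_rw [flip]
    rw [integral_conj]
    simp_rw [key]
    rw [increment_char hB ht h c]
    rw [← Complex.ofReal_exp, Complex.conj_ofReal, ← Complex.ofReal_exp]
    norm_cast
    rw [_root_.abs_of_nonpos (by linarith : t - s ≤ 0)]
    ring

/-- dyadic approximation from below -/
def dyadic (m : ℕ) (t : ℝ) : ℝ := (⌊t * 2 ^ m⌋₊ : ℝ) / 2 ^ m

lemma dyadic_nonneg (m : ℕ) (t : ℝ) : 0 ≤ dyadic m t :=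
  div_nonneg (Nat.cast_nonneg _) (by positivity)

lemma dyadic_tendsto {t : ℝ} (ht : 0 ≤ t) : Tendsto (fun m => dyadic m t) atTop (nhds t) := by
  have h1 : ∀ m : ℕ, t - (2:ℝ)⁻¹ ^ m ≤ dyadic m t := by
    intro m
    have h2 : (0:ℝ) < 2 ^ m := by positivity
    have := Nat.sub_one_lt_floor (t * 2 ^ m)
    rw [dyadic, le_div_iff₀ h2]
    have : t * 2 ^ m - 1 ≤ (⌊t * 2 ^ m⌋₊ : ℝ) := (Nat.sub_one_lt_floor _).le
    calc (t - (2:ℝ)⁻¹ ^ m) * 2 ^ m = t * 2 ^ m - 1 := by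
          rw [sub_mul, ← mul_pow]; norm_num
      _ ≤ _ := this
  have h2 : ∀ m : ℕ, dyadic m t ≤ t := by
    intro m
    have h2 : (0:ℝ) < 2 ^ m := by positivity
    rw [dyadic, div_le_iff₀ h2]
    exact Nat.floor_le (by positivity)
  have hlo : Tendsto (fun m : ℕ => t - (2:ℝ)⁻¹ ^ m) atTop (nhds t) := by
    have := tendsto_pow_atTop_nhds_zero_of_lt_one (by norm_num : (0:ℝ) ≤ 2⁻¹) (by norm_num)
    simpa using tendsto_const_nhds.sub this
  exact tendsto_of_tendsto_of_tendsto_of_le_of_le hlo tendsto_const_nhds h1 h2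

lemma jointAEM (hB : IsStdBrownianMotion P B) {α : Type*} [MeasurableSpace α]
    (ν : Measure α) [IsFiniteMeasure ν] {τ : α → ℝ} (hτ : Measurable τ)
    (hτ0 : ∀ᵐ a ∂ν, 0 ≤ τ a) :
    AEMeasurable (fun p : Ω × α => B (τ p.2) p.1) (P.prod ν) := by
  have hFm : ∀ m : ℕ, Measurable (fun p : Ω × α => B (dyadic m (τ p.2)) p.1) := by
    intro m
    have hout : Measurable (fun q : Ω × ℕ => B ((q.2 : ℝ) / 2 ^ m) q.1) := by
      apply measurable_from_prod_countable_left
      intro n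
      exact hB.measurable _ (div_nonneg (Nat.cast_nonneg _) (by positivity))
    have hin : Measurable (fun p : Ω × α => (p.1, ⌊τ p.2 * 2 ^ m⌋₊)) :=
      measurable_fst.prodMk ((hτ.comp measurable_snd).mul measurable_const).nat_floor
    exact hout.comp hin
  have hae : ∀ᵐ p : Ω × α ∂(P.prod ν),
      Tendsto (fun m => B (dyadic m (τ p.2)) p.1) atTop (nhds (B (τ p.2) p.1)) := by
    have h1 : ∀ᵐ p : Ω × α ∂(P.prod ν), ContinuousOn (fun t => B t p.1) (Set.Ici 0) := by
      have h := hB.cont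
      rw [ae_iff] at h ⊢
      obtain ⟨S, hS1, hS2, hS3⟩ := exists_measurable_superset_of_null h
      refine measure_mono_null (fun p hp => ?_) (?_ : (P.prod ν) (S ×ˢ univ) = 0)
      · exact ⟨hS1 hp, trivial⟩
      · rw [Measure.prod_prod, hS3, zero_mul]
    have h2 : ∀ᵐ p : Ω × α ∂(P.prod ν), 0 ≤ τ p.2 := by
      rw [ae_iff] at hτ0 ⊢
      obtain ⟨S, hS1, hS2, hS3⟩ := exists_measurable_superset_of_null hτ0
      refine measure_mono_null (fun p hp => ?_) (?_ : (P.prod ν) (univ ×ˢ S) = 0)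
      · exact ⟨trivial, hS1 hp⟩
      · rw [Measure.prod_prod, hS3, mul_zero]
    filter_upwards [h1, h2] with p hcont ht
    have : Tendsto (fun m => dyadic m (τ p.2)) atTop (nhdsWithin (τ p.2) (Set.Ici 0)) := by
      rw [tendsto_nhdsWithin_iff]
      exact ⟨dyadic_tendsto ht, Eventually.of_forall fun m => dyadic_nonneg m _⟩
    exact ((hcont (τ p.2) ht).tendsto).comp this
  exact aemeasurable_of_tendsto_metrizable_ae atTop (fun m => (hFm m).aemeasurable) hae

lemma norm_f_eq_one (c x : ℝ) : ‖Complex.exp (c * x * Complex.I)‖ = 1 := by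
  rw [Complex.norm_exp]
  simp [mul_comm]

lemma integrable_exp_neg_abs {a : ℝ} (ha : 0 < a) :
    Integrable (fun u : ℝ => Real.exp (-a * |u|)) := by
  have hIoi : IntegrableOn (fun u : ℝ => Real.exp (-a * |u|)) (Ioi 0) := by
    apply (exp_neg_integrableOn_Ioi 0 ha).congr_fun _ measurableSet_Ioi
    intro x hx
    simp [abs_of_pos (Set.mem_Ioi.mp hx)]
  have hIic : IntegrableOn (fun u : ℝ => Real.exp (-a * |u|)) (Iic 0) := by
    rw [← Measure.map_neg_eq_self (volume : Measure ℝ)]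
    have m : MeasurableEmbedding fun x : ℝ => -x := (Homeomorph.neg ℝ).measurableEmbedding
    rw [m.integrableOn_map_iff]
    simp_rw [Function.comp_def, abs_neg, neg_preimage, neg_Iic, neg_zero]
    exact (integrableOn_Ici_iff_integrableOn_Ioi).mpr hIoi
  rw [← integrableOn_univ, ← Iic_union_Ioi (a := (0:ℝ))]
  exact hIic.union hIoi

lemma integral_exp_neg_abs {a : ℝ} (ha : 0 < a) :
    ∫ u : ℝ, Real.exp (-a * |u|) = 2 / a := by
  rw [integral_comp_abs (f := fun x => Real.exp (-a * x))]
  have h := integral_comp_mul_left_Ioi (fun y => Real.exp (-y)) 0 ha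
  simp only [mul_zero, integral_exp_neg_Ioi, smul_eq_mul, neg_zero, Real.exp_zero,
    mul_one, neg_mul] at h ⊢
  rw [h]
  field_simp

lemma second_moment (hB : IsStdBrownianMotion P B) {c : ℝ} (hc : c ≠ 0) {T : ℝ} (hT : 0 < T) :
    ∫ ω, ‖∫ t in Set.Ioc 0 T, Complex.exp (c * B t ω * Complex.I)‖ ^ 2 ∂P ≤ 4 * T / c ^ 2 := by
  set νT : Measure ℝ := volume.restrict (Set.Ioc 0 T) with hνT
  haveI : IsFiniteMeasure νT := by
    constructor
    rw [hνT, Measure.restrict_apply_univ, Real.volume_Ioc]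
    exact ENNReal.ofReal_lt_top
  set ν2 : Measure (ℝ × ℝ) := νT.prod νT with hν2
  haveI : IsFiniteMeasure ν2 := by rw [hν2]; infer_instance
  set f : ℝ → Ω → ℂ := fun t ω => Complex.exp (c * B t ω * Complex.I) with hf
  set G : Ω × (ℝ × ℝ) → ℂ := fun q => f q.2.1 q.1 * (starRingEnd ℂ) (f q.2.2 q.1) with hG
  -- a.e. facts on ν2
  have hmem : ∀ᵐ p : ℝ × ℝ ∂ν2, p ∈ Set.Ioc 0 T ×ˢ Set.Ioc 0 T := by
    rw [hν2, hνT, Measure.prod_restrict]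
    exact ae_restrict_mem (measurableSet_Ioc.prod measurableSet_Ioc)
  -- measurability of G
  have hm1 : AEMeasurable (fun q : Ω × (ℝ × ℝ) => B q.2.1 q.1) (P.prod ν2) :=
    jointAEM hB ν2 measurable_fst (by filter_upwards [hmem] with p hp using hp.1.1.le)
  have hm2 : AEMeasurable (fun q : Ω × (ℝ × ℝ) => B q.2.2 q.1) (P.prod ν2) :=
    jointAEM hB ν2 measurable_snd (by filter_upwards [hmem] with p hp using hp.2.1.le)
  have hΦ : Continuous (fun z : ℝ × ℝ => Complex.exp (c * z.1 * Complex.I) *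
      (starRingEnd ℂ) (Complex.exp (c * z.2 * Complex.I))) :=
    (Complex.continuous_exp.comp ((continuous_const.mul
        (Complex.continuous_ofReal.comp continuous_fst)).mul continuous_const)).mul
      (Complex.continuous_conj.comp (Complex.continuous_exp.comp ((continuous_const.mul
        (Complex.continuous_ofReal.comp continuous_snd)).mul continuous_const)))
  have hGm : AEStronglyMeasurable G (P.prod ν2) := by
    have : G = (fun z : ℝ × ℝ => Complex.exp (c * z.1 * Complex.I) *
        (starRingEnd ℂ) (Complex.exp (c * z.2 * Complex.I))) ∘
        (fun q : Ω × (ℝ × ℝ) => (B q.2.1 q.1, B q.2.2 q.1)) := rfl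
    rw [this]
    exact ((hΦ.measurable).comp_aemeasurable (hm1.prodMk hm2)).aestronglyMeasurable
  have hGnorm : ∀ q, ‖G q‖ = 1 := by
    intro q
    rw [hG]
    simp only [norm_mul, RCLike.norm_conj]
    rw [hf]; simp only []
    rw [norm_f_eq_one, norm_f_eq_one, mul_one]
  have hGi : Integrable G (P.prod ν2) := by
    refine (integrable_const (1:ℝ)).mono' hGm ?_
    exact Eventually.of_forall fun q => (hGnorm q).le
  -- Step A: identify J with ‖I‖²
  set J : Ω → ℂ := fun ω => ∫ p, G (ω, p) ∂ν2 with hJ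
  have stepA : ∀ᵐ ω ∂P, J ω = ((‖∫ t in Set.Ioc 0 T, f t ω‖ ^ 2 : ℝ) : ℂ) := by
    filter_upwards [hB.cont] with ω hcont
    have hfc : ContinuousOn (fun t => f t ω) (Set.Ici 0) := by
      apply Complex.continuous_exp.comp_continuousOn
      apply ContinuousOn.mul (ContinuousOn.mul continuousOn_const ?_) continuousOn_const
      exact Complex.continuous_ofReal.comp_continuousOn hcont
    have hfi : IntegrableOn (fun t => f t ω) (Set.Ioc 0 T) := by
      apply IntegrableOn.mono_set _ Set.Ioc_subset_Icc_self
      exact (hfc.mono (Set.Icc_subset_Ici_self : Set.Icc (0:ℝ) T ⊆ Set.Ici 0)).integrableOn_Icc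
    have hgc : ContinuousOn (fun p : ℝ × ℝ => f p.1 ω * (starRingEnd ℂ) (f p.2 ω))
        (Set.Ioc 0 T ×ˢ Set.Ioc 0 T) := by
      apply ContinuousOn.mul
      · exact hfc.comp continuousOn_fst fun p hp => hp.1.1.le
      · exact Complex.continuous_conj.comp_continuousOn
          (hfc.comp continuousOn_snd fun p hp => hp.2.1.le)
    have hgm : AEStronglyMeasurable (fun p : ℝ × ℝ => f p.1 ω * (starRingEnd ℂ) (f p.2 ω)) ν2 := by
      rw [hν2, hνT, Measure.prod_restrict]
      exact hgc.aestronglyMeasurable (measurableSet_Ioc.prod measurableSet_Ioc)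
    have hgi : Integrable (fun p : ℝ × ℝ => f p.1 ω * (starRingEnd ℂ) (f p.2 ω)) ν2 := by
      refine (integrable_const (1:ℝ)).mono' hgm (Eventually.of_forall fun p => ?_)
      simp only [norm_mul, RCLike.norm_conj, hf]
      rw [norm_f_eq_one, norm_f_eq_one, mul_one]
    have : J ω = ∫ t, ∫ s, f t ω * (starRingEnd ℂ) (f s ω) ∂νT ∂νT := by
      rw [hJ]
      exact integral_prod _ hgi
    rw [this]
    have inner_eq : ∀ t : ℝ, ∫ s, f t ω * (starRingEnd ℂ) (f s ω) ∂νT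
        = f t ω * (starRingEnd ℂ) (∫ s in Set.Ioc 0 T, f s ω) := by
      intro t
      rw [integral_const_mul, ← integral_conj]
    simp_rw [inner_eq]
    rw [integral_mul_const]
    rw [show (∫ t in Set.Ioc 0 T, f t ω) * (starRingEnd ℂ) (∫ s in Set.Ioc 0 T, f s ω)
      = ((‖∫ t in Set.Ioc 0 T, f t ω‖ : ℂ)) ^ 2 from Complex.mul_conj' _]
    push_cast
    ring
  -- Step B
  have hJint : Integrable J P := hGi.integral_prod_left
  have stepB : ∫ ω, ‖∫ t in Set.Ioc 0 T, f t ω‖ ^ 2 ∂P = (∫ ω, J ω ∂P).re := by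
    rw [show (∫ ω, J ω ∂P).re = RCLike.re (∫ ω, J ω ∂P) from rfl, ← integral_re hJint]
    apply integral_congr_ae
    filter_upwards [stepA] with ω hω
    rw [show RCLike.re (J ω) = (J ω).re from rfl, hω, Complex.ofReal_re]
  -- Step C : swap
  have stepC : ∫ ω, J ω ∂P = ∫ p, ∫ ω, G (ω, p) ∂P ∂ν2 :=
    integral_integral_swap (f := fun ω p => G (ω, p)) hGi
  -- Step D : correlation
  have stepD : ∫ p, ∫ ω, G (ω, p) ∂P ∂ν2
      = ∫ p, ((Real.exp (-|p.1 - p.2| * c ^ 2 / 2) : ℝ) : ℂ) ∂ν2 := by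
    apply integral_congr_ae
    filter_upwards [hmem] with p hp
    rw [hG]
    simp only []
    rw [correlation hB hp.2.1.le hp.1.1.le c, Complex.ofReal_exp]
  -- Step E
  have stepE : ∫ p, ((Real.exp (-|p.1 - p.2| * c ^ 2 / 2) : ℝ) : ℂ) ∂ν2
      = ((∫ p, Real.exp (-|p.1 - p.2| * c ^ 2 / 2) ∂ν2 : ℝ) : ℂ) := integral_ofReal
  -- Step F : bound the real integral
  have ha : 0 < c ^ 2 / 2 := by positivity
  have habs : Integrable (fun u : ℝ => Real.exp (-(c ^ 2 / 2) * |u|)) :=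
    integrable_exp_neg_abs ha
  have hh : Continuous (fun p : ℝ × ℝ => Real.exp (-|p.1 - p.2| * c ^ 2 / 2)) :=
    Real.continuous_exp.comp
      (((continuous_fst.sub continuous_snd).abs.neg.mul continuous_const).div_const 2)
  have hhi : Integrable (fun p : ℝ × ℝ => Real.exp (-|p.1 - p.2| * c ^ 2 / 2)) ν2 := by
    refine (integrable_const (1:ℝ)).mono' hh.aestronglyMeasurable
      (Eventually.of_forall fun p => ?_)
    rw [Real.norm_eq_abs, abs_of_pos (Real.exp_pos _)]
    rw [← Real.exp_zero]
    apply Real.exp_le_exp.mpr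
    nlinarith [abs_nonneg (p.1 - p.2), sq_nonneg c]
  have inner_bound : ∀ t : ℝ, ∫ s, Real.exp (-|t - s| * c ^ 2 / 2) ∂νT ≤ 4 / c ^ 2 := by
    intro t
    have hrw : ∀ s : ℝ, Real.exp (-|t - s| * c ^ 2 / 2)
        = (fun u : ℝ => Real.exp (-(c ^ 2 / 2) * |u|)) (s - t) := by
      intro s
      simp only []
      rw [abs_sub_comm t s]
      ring_nf
    simp_rw [hrw]
    have h1 : ∫ s in Set.Ioc 0 T, (fun u : ℝ => Real.exp (-(c ^ 2 / 2) * |u|)) (s - t)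
        ≤ ∫ s : ℝ, (fun u : ℝ => Real.exp (-(c ^ 2 / 2) * |u|)) (s - t) := by
      apply setIntegral_le_integral (habs.comp_sub_right t)
      exact Eventually.of_forall fun s => (Real.exp_pos _).le
    calc ∫ s, (fun u : ℝ => Real.exp (-(c ^ 2 / 2) * |u|)) (s - t) ∂νT ≤ _ := h1
      _ = ∫ u : ℝ, Real.exp (-(c ^ 2 / 2) * |u|) :=
          integral_sub_right_eq_self (fun u : ℝ => Real.exp (-(c ^ 2 / 2) * |u|)) t
      _ = 2 / (c ^ 2 / 2) := integral_exp_neg_abs ha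
      _ = 4 / c ^ 2 := by field_simp; ring
  have stepF : ∫ p, Real.exp (-|p.1 - p.2| * c ^ 2 / 2) ∂ν2 ≤ 4 * T / c ^ 2 := by
    rw [hν2, integral_prod _ hhi]
    have houter : ∀ t : ℝ, (0:ℝ) ≤ ∫ s, Real.exp (-|t - s| * c ^ 2 / 2) ∂νT :=
      fun t => integral_nonneg fun s => (Real.exp_pos _).le
    calc ∫ t, ∫ s, Real.exp (-|t - s| * c ^ 2 / 2) ∂νT ∂νT
        ≤ ∫ _t, (4 / c ^ 2 : ℝ) ∂νT := by
          apply integral_mono (hhi.integral_prod_left) (integrable_const _)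
          exact inner_bound
      _ = (νT Set.univ).toReal * (4 / c ^ 2) := by rw [integral_const, smul_eq_mul]; rfl
      _ = 4 * T / c ^ 2 := by
          rw [hνT, Measure.restrict_apply_univ, Real.volume_Ioc, ENNReal.toReal_ofReal
            (by linarith)]
          field_simp
          ring
  -- combine
  calc ∫ ω, ‖∫ t in Set.Ioc 0 T, Complex.exp (c * B t ω * Complex.I)‖ ^ 2 ∂P
      = (∫ ω, J ω ∂P).re := stepB
    _ = ∫ p, Real.exp (-|p.1 - p.2| * c ^ 2 / 2) ∂ν2 := by
        rw [stepC, stepD, stepE, Complex.ofReal_re]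
    _ ≤ 4 * T / c ^ 2 := stepF

lemma sqrt_tendsto_atTop : Tendsto Real.sqrt atTop atTop := by
  rw [tendsto_atTop_atTop]
  intro b
  refine ⟨(max b 0) ^ 2, fun a ha => ?_⟩
  calc b ≤ max b 0 := le_max_left _ _
    _ = Real.sqrt ((max b 0) ^ 2) := (Real.sqrt_sq (le_max_right _ _)).symm
    _ ≤ Real.sqrt a := Real.sqrt_le_sqrt ha

lemma interp {f : ℝ → ℂ} (hInt : ∀ T : ℝ, IntegrableOn f (Set.Ioc 0 T))
    (hnorm : ∀ t, ‖f t‖ ≤ 1)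
    (h : Tendsto (fun n : ℕ => (1 / ((n:ℝ)^2)) • ∫ t in Set.Ioc 0 ((n:ℝ)^2), f t) atTop (nhds 0)) :
    Tendsto (fun T : ℝ => (1 / T) • ∫ t in Set.Ioc 0 T, f t) atTop (nhds 0) := by
  set F : ℝ → ℂ := fun T => ∫ t in Set.Ioc 0 T, f t with hF
  have hdiff : ∀ S T : ℝ, 0 ≤ S → S ≤ T → ‖F T - F S‖ ≤ T - S := by
    intro S T hS hST
    have hsplit : F T = F S + ∫ t in Set.Ioc S T, f t := by
      rw [hF]
      simp only []
      rw [← setIntegral_union ((Set.Ioc_disjoint_Ioc_of_le le_rfl)) measurableSet_Ioc (hInt S)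
        ((hInt T).mono_set (Set.Ioc_subset_Ioc hS le_rfl)),
        Set.Ioc_union_Ioc_eq_Ioc hS hST]
    rw [hsplit, add_sub_cancel_left]
    have hmeas : AEStronglyMeasurable f (volume.restrict (Set.Ioc S T)) :=
      (((hInt T).mono_set (Set.Ioc_subset_Ioc hS le_rfl))).aestronglyMeasurable
    have hb := norm_setIntegral_le_of_norm_le_const (s := Set.Ioc S T) (C := 1)
      (by rw [Real.volume_Ioc]; exact ENNReal.ofReal_lt_top)
      (fun t _ => hnorm t)
    calc ‖∫ t in Set.Ioc S T, f t‖ ≤ 1 * (volume (Set.Ioc S T)).toReal := hb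
      _ = T - S := by
          rw [Real.volume_Ioc, one_mul, ENNReal.toReal_ofReal (sub_nonneg.mpr hST)]
  -- main squeeze
  have hsq : Tendsto (fun T : ℝ => ⌊Real.sqrt T⌋₊) atTop atTop :=
    tendsto_nat_floor_atTop.comp sqrt_tendsto_atTop
  set u : ℕ → ℝ := fun n => (2 * (n:ℝ) + 1) / (n:ℝ)^2 + ‖(1 / ((n:ℝ)^2)) • F ((n:ℝ)^2)‖
    with hu_def
  have hu : Tendsto u atTop (nhds 0) := by
    have h1 : Tendsto (fun n : ℕ => (2 * (n:ℝ) + 1) / (n:ℝ)^2) atTop (nhds 0) := by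
      have h2 : Tendsto (fun n : ℕ => 2 / (n:ℝ) + 1 / (n:ℝ)^2) atTop (nhds 0) := by
        have ha := tendsto_const_div_atTop_nhds_zero_nat (2:ℝ)
        have hbb := tendsto_one_div_atTop_nhds_zero_nat (𝕜 := ℝ)
        have hc2 : Tendsto (fun n : ℕ => 1 / (n:ℝ)^2) atTop (nhds 0) := by
          have := hbb.mul hbb
          simpa [div_mul_div_comm, one_mul, sq] using this
        simpa using ha.add hc2
      apply h2.congr'
      filter_upwards [eventually_ge_atTop 1] with n hn
      have hn' : ((n:ℝ)) ≠ 0 := by positivity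
      field_simp
    have h2 : Tendsto (fun n : ℕ => ‖(1 / ((n:ℝ)^2)) • F ((n:ℝ)^2)‖) atTop (nhds 0) := by
      have h2' := h.norm
      rwa [norm_zero] at h2'
    have h3 := h1.add h2
    rwa [add_zero] at h3
  rw [tendsto_zero_iff_norm_tendsto_zero]
  apply squeeze_zero' (Eventually.of_forall fun T => norm_nonneg _)
    (?_ : ∀ᶠ T in atTop, ‖(1 / T) • F T‖ ≤ u ⌊Real.sqrt T⌋₊) (hu.comp hsq)
  filter_upwards [eventually_ge_atTop 1] with T hT
  set n : ℕ := ⌊Real.sqrt T⌋₊ with hn_def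
  have hT0 : (0:ℝ) < T := lt_of_lt_of_le one_pos hT
  have hs1 : (1:ℝ) ≤ Real.sqrt T := by
    rw [show (1:ℝ) = Real.sqrt 1 by simp]
    exact Real.sqrt_le_sqrt hT
  have hn1 : 1 ≤ n := Nat.le_floor (by exact_mod_cast hs1)
  have hn1' : (1:ℝ) ≤ (n:ℝ) := by exact_mod_cast hn1
  have hnpos : (0:ℝ) < (n:ℝ)^2 := by positivity
  have hn2 : ((n:ℝ))^2 ≤ T := by
    have h1 : ((n:ℝ)) ≤ Real.sqrt T := Nat.floor_le (Real.sqrt_nonneg T)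
    calc ((n:ℝ))^2 ≤ (Real.sqrt T)^2 := by nlinarith [Real.sqrt_nonneg T]
      _ = T := Real.sq_sqrt hT0.le
  have hn3 : T ≤ ((n:ℝ) + 1)^2 := by
    have h1 : Real.sqrt T < (n:ℝ) + 1 := Nat.lt_floor_add_one _
    calc T = (Real.sqrt T)^2 := (Real.sq_sqrt hT0.le).symm
      _ ≤ ((n:ℝ) + 1)^2 := by nlinarith [Real.sqrt_nonneg T]
  have key : ‖(1 / T) • F T‖ ≤ u n := by
    have hFT : ‖F T‖ ≤ ‖F ((n:ℝ)^2)‖ + (2 * (n:ℝ) + 1) := by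
      have h1 : ‖F T - F ((n:ℝ)^2)‖ ≤ T - (n:ℝ)^2 := hdiff _ _ (by positivity) hn2
      have h2 : T - (n:ℝ)^2 ≤ 2 * (n:ℝ) + 1 := by nlinarith
      calc ‖F T‖ = ‖F ((n:ℝ)^2) + (F T - F ((n:ℝ)^2))‖ := by ring_nf
        _ ≤ ‖F ((n:ℝ)^2)‖ + ‖F T - F ((n:ℝ)^2)‖ := norm_add_le _ _
        _ ≤ ‖F ((n:ℝ)^2)‖ + (2 * (n:ℝ) + 1) := by linarith
    rw [norm_smul]
    have h3 : ‖(1:ℝ) / T‖ = 1 / T := by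
      rw [Real.norm_eq_abs, abs_of_pos (by positivity)]
    rw [h3, hu_def]
    simp only []
    rw [norm_smul]
    have h4 : ‖(1:ℝ) / ((n:ℝ)^2)‖ = 1 / ((n:ℝ)^2) := by
      rw [Real.norm_eq_abs, abs_of_pos (by positivity)]
    rw [h4]
    have h5 : 1 / T ≤ 1 / ((n:ℝ)^2) := by
      apply one_div_le_one_div_of_le hnpos hn2
    calc 1 / T * ‖F T‖ ≤ 1 / ((n:ℝ)^2) * (‖F ((n:ℝ)^2)‖ + (2 * (n:ℝ) + 1)) := by
          apply mul_le_mul h5 hFT (norm_nonneg _) (by positivity)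
      _ = (2 * (n:ℝ) + 1) / (n:ℝ)^2 + 1 / ((n:ℝ)^2) * ‖F ((n:ℝ)^2)‖ := by ring
    -- done? need exact match
  exact key

lemma restrict_finite {T : ℝ} : IsFiniteMeasure (volume.restrict (Set.Ioc (0:ℝ) T)) := by
  constructor
  rw [Measure.restrict_apply_univ, Real.volume_Ioc]
  exact ENNReal.ofReal_lt_top

lemma hYm (hB : IsStdBrownianMotion P B) (c : ℝ) (T : ℝ) :
    AEStronglyMeasurable
      (fun ω => ∫ t in Set.Ioc 0 T, Complex.exp (c * B t ω * Complex.I)) P := by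
  haveI : IsFiniteMeasure (volume.restrict (Set.Ioc (0:ℝ) T)) := restrict_finite
  have hA : AEMeasurable (fun p : Ω × ℝ => B p.2 p.1)
      (P.prod (volume.restrict (Set.Ioc 0 T))) := by
    apply jointAEM hB _ measurable_id
    filter_upwards [ae_restrict_mem measurableSet_Ioc] with t ht using ht.1.le
  have hcont : Continuous (fun x : ℝ => Complex.exp (c * x * Complex.I)) :=
    Complex.continuous_exp.comp
      ((continuous_const.mul Complex.continuous_ofReal).mul continuous_const)
  have hFm : AEStronglyMeasurable (fun p : Ω × ℝ => Complex.exp (c * B p.2 p.1 * Complex.I))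
      (P.prod (volume.restrict (Set.Ioc 0 T))) :=
    (hcont.measurable.comp_aemeasurable hA).aestronglyMeasurable
  exact hFm.integral_prod_right'

lemma norm_setIoc_le (c : ℝ) (g : ℝ → ℝ) {T : ℝ} (hT : 0 ≤ T) :
    ‖∫ t in Set.Ioc 0 T, Complex.exp (c * g t * Complex.I)‖ ≤ T := by
  have h := norm_setIntegral_le_of_norm_le_const_ae (μ := volume) (s := Set.Ioc (0:ℝ) T)
    (C := 1) (by rw [Real.volume_Ioc]; exact ENNReal.ofReal_lt_top)
    (Eventually.of_forall fun t => (norm_f_eq_one c (g t)).le)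
  calc ‖∫ t in Set.Ioc 0 T, Complex.exp (c * g t * Complex.I)‖
      ≤ 1 * (volume (Set.Ioc (0:ℝ) T)).toReal := h
    _ = T := by rw [one_mul, Real.volume_Ioc, ENNReal.toReal_ofReal (by linarith)]; ring

lemma as_tendsto_char (hB : IsStdBrownianMotion P B) {c : ℝ} (hc : c ≠ 0) :
    ∀ᵐ ω ∂P, Tendsto (fun T : ℝ =>
        (1 / T) • ∫ t in Set.Ioc 0 T, Complex.exp (c * B t ω * Complex.I))
      atTop (nhds 0) := by
  set W : ℕ → Ω → ℝ := fun n ω =>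
    ‖(1 / (((n:ℝ)+1)^2)) • ∫ t in Set.Ioc 0 (((n:ℝ)+1)^2),
        Complex.exp (c * B t ω * Complex.I)‖^2 with hW
  have hTn : ∀ n : ℕ, (0:ℝ) < ((n:ℝ)+1)^2 := fun n => by positivity
  have hWsm : ∀ n : ℕ, AEStronglyMeasurable (W n) P := fun n =>
    by have := (((hYm hB c (((n:ℝ)+1)^2)).const_smul (1 / (((n:ℝ)+1)^2))).norm.pow 2); exact this
  have hWnn : ∀ n ω, 0 ≤ W n ω := fun n ω => sq_nonneg _
  have heq : ∀ (n : ℕ) (ω : Ω), W n ω = (1 / (((n:ℝ)+1)^2))^2 *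
      ‖∫ t in Set.Ioc 0 (((n:ℝ)+1)^2), Complex.exp (c * B t ω * Complex.I)‖^2 := by
    intro n ω
    rw [hW]
    simp only []
    rw [norm_smul, mul_pow]
    congr 1
    rw [Real.norm_eq_abs, _root_.sq_abs]
  have hWle : ∀ n ω, W n ω ≤ 1 := by
    intro n ω
    rw [heq]
    have h1 := norm_setIoc_le c (fun t => B t ω) (hTn n).le
    have h2 : ‖∫ t in Set.Ioc 0 (((n:ℝ)+1)^2), Complex.exp (c * B t ω * Complex.I)‖^2
        ≤ ((((n:ℝ)+1)^2))^2 := by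
      nlinarith [norm_nonneg (∫ t in Set.Ioc 0 (((n:ℝ)+1)^2),
        Complex.exp (c * B t ω * Complex.I))]
    calc (1 / (((n:ℝ)+1)^2))^2 *
          ‖∫ t in Set.Ioc 0 (((n:ℝ)+1)^2), Complex.exp (c * B t ω * Complex.I)‖^2
        ≤ (1 / (((n:ℝ)+1)^2))^2 * ((((n:ℝ)+1)^2))^2 :=
          mul_le_mul_of_nonneg_left h2 (by positivity)
      _ = 1 := by field_simp
  have hWint : ∀ n : ℕ, Integrable (W n) P :=
    fun n => (integrable_const (1:ℝ)).mono' (hWsm n)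
      (Eventually.of_forall fun ω => by
        rw [Real.norm_eq_abs, _root_.abs_of_nonneg (hWnn n ω)]; exact hWle n ω)
  have hWbound : ∀ n : ℕ, ∫ ω, W n ω ∂P ≤ 4 / (c^2 * ((n:ℝ)+1)^2) := by
    intro n
    simp_rw [heq]
    rw [integral_const_mul]
    have h2 := second_moment hB hc (hTn n)
    calc (1 / (((n:ℝ)+1)^2))^2 *
          ∫ ω, ‖∫ t in Set.Ioc 0 (((n:ℝ)+1)^2), Complex.exp (c * B t ω * Complex.I)‖^2 ∂P
        ≤ (1 / (((n:ℝ)+1)^2))^2 * (4 * (((n:ℝ)+1)^2) / c^2) := by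
          apply mul_le_mul_of_nonneg_left h2 (by positivity)
      _ = 4 / (c^2 * ((n:ℝ)+1)^2) := by
          field_simp
  have hsum : ∑' n, ∫⁻ ω, ENNReal.ofReal (W n ω) ∂P ≠ ⊤ := by
    apply LT.lt.ne
    have hle : ∀ n : ℕ, ∫⁻ ω, ENNReal.ofReal (W n ω) ∂P
        ≤ ENNReal.ofReal (4 / (c^2 * ((n:ℝ)+1)^2)) := by
      intro n
      rw [← ofReal_integral_eq_lintegral_ofReal (hWint n)
        (Eventually.of_forall (hWnn n))]
      exact ENNReal.ofReal_le_ofReal (hWbound n)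
    have hsumm : Summable (fun n : ℕ => 4 / (c^2 * ((n:ℝ)+1)^2)) := by
      have h1 : Summable (fun n : ℕ => 1 / ((n:ℝ))^2) :=
        Real.summable_one_div_nat_pow.mpr one_lt_two
      have h2 : Summable (fun n : ℕ => 1 / (((n:ℝ)+1))^2) := by
        have := (summable_nat_add_iff (f := fun n : ℕ => 1 / ((n:ℝ))^2) 1).mpr h1
        apply this.congr
        intro n
        push_cast
        ring
      have h3 := h2.mul_left (4 / c^2)
      apply h3.congr
      intro n
      field_simp
    calc ∑' n, ∫⁻ ω, ENNReal.ofReal (W n ω) ∂P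
        ≤ ∑' (n : ℕ), ENNReal.ofReal (4 / (c^2 * ((n:ℝ)+1)^2)) := ENNReal.tsum_le_tsum hle
      _ = ENNReal.ofReal (∑' (n : ℕ), 4 / (c^2 * ((n:ℝ)+1)^2)) :=
          (ENNReal.ofReal_tsum_of_nonneg (fun n => by positivity) hsumm).symm
      _ < ⊤ := ENNReal.ofReal_lt_top
  have hae : ∀ᵐ ω ∂P, ∑' n, ENNReal.ofReal (W n ω) < ⊤ := by
    apply ae_lt_top' (AEMeasurable.ennreal_tsum fun n => (hWsm n).aemeasurable.ennreal_ofReal)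
    rw [lintegral_tsum fun n => (hWsm n).aemeasurable.ennreal_ofReal]
    exact hsum
  filter_upwards [hae, hB.cont] with ω hfin hcont
  -- convergence along (n+1)^2
  have h1 : Tendsto (fun n : ℕ => ENNReal.ofReal (W n ω)) atTop (nhds 0) :=
    ENNReal.tendsto_atTop_zero_of_tsum_ne_top hfin.ne
  have h2 : Tendsto (fun n : ℕ => W n ω) atTop (nhds 0) := by
    have h3 := (ENNReal.tendsto_toReal (ENNReal.zero_ne_top)).comp h1
    simp only [ENNReal.toReal_zero] at h3
    apply h3.congr
    intro n
    simp only [Function.comp_apply, ENNReal.toReal_ofReal (hWnn n ω)]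
  have h4 : Tendsto (fun n : ℕ => ‖(1 / (((n:ℝ)+1)^2)) • ∫ t in Set.Ioc 0 (((n:ℝ)+1)^2),
      Complex.exp (c * B t ω * Complex.I)‖) atTop (nhds 0) := by
    have h5 := (Real.continuous_sqrt.tendsto 0).comp h2
    simp only [Real.sqrt_zero] at h5
    apply h5.congr
    intro n
    simp only [Function.comp_apply, hW]
    exact Real.sqrt_sq (norm_nonneg _)
  have h6 : Tendsto (fun n : ℕ => (1 / (((n:ℝ)+1)^2)) • ∫ t in Set.Ioc 0 (((n:ℝ)+1)^2),
      Complex.exp (c * B t ω * Complex.I)) atTop (nhds 0) :=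
    tendsto_zero_iff_norm_tendsto_zero.mpr h4
  -- reindex to n^2
  have h7 : Tendsto (fun n : ℕ => (1 / ((n:ℝ)^2)) • ∫ t in Set.Ioc 0 ((n:ℝ)^2),
      Complex.exp (c * B t ω * Complex.I)) atTop (nhds 0) := by
    rw [← tendsto_add_atTop_iff_nat 1]
    apply h6.congr
    intro n
    push_cast
    norm_num
  -- interpolation
  apply interp
  · intro T
    rcases le_or_gt T 0 with hT | hT
    · rw [Set.Ioc_eq_empty (by exact fun h => absurd (h.trans_le hT) (lt_irrefl 0))]
      exact integrableOn_empty
    · apply IntegrableOn.mono_set _ Set.Ioc_subset_Icc_self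
      apply ContinuousOn.integrableOn_Icc
      apply Complex.continuous_exp.comp_continuousOn
      apply ContinuousOn.mul (ContinuousOn.mul continuousOn_const ?_) continuousOn_const
      exact Complex.continuous_ofReal.comp_continuousOn
        (hcont.mono (Set.Icc_subset_Ici_self : Set.Icc (0:ℝ) T ⊆ Set.Ici 0))
  · exact fun t => (norm_f_eq_one c (B t ω)).le
  · exact h7

lemma volume_eq_haar : (volume : Measure UnitAddCircle) = AddCircle.haarAddCircle := by
  rw [AddCircle.volume_eq_smul_haarAddCircle]
  simp

lemma isCUD_of (g : ℝ → ℝ) (hcont : ContinuousOn g (Set.Ici 0))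
    (hchar : ∀ k : ℤ, k ≠ 0 → Tendsto (fun T : ℝ =>
        (1 / T) • ∫ t in Set.Ioc (0:ℝ) T,
          Complex.exp ((2 * π * k : ℝ) * g t * Complex.I)) atTop (nhds 0)) :
    IsCUD (volume : Measure UnitAddCircle) (fun t => (↑(g t) : UnitAddCircle)) := by
  haveI : IsProbabilityMeasure (volume : Measure UnitAddCircle) := by
    rw [volume_eq_haar]; infer_instance
  set γ : ℝ → UnitAddCircle := fun t => (↑(g t) : UnitAddCircle) with hγ
  have hγc : ContinuousOn γ (Set.Ici 0) :=
    (AddCircle.continuous_mk' 1).comp_continuousOn hcont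
  -- integrability of φ ∘ γ on Ioc 0 T
  have hInt : ∀ (φ : C(UnitAddCircle, ℂ)) (T : ℝ),
      IntegrableOn (fun t => φ (γ t)) (Set.Ioc 0 T) := by
    intro φ T
    rcases le_or_gt T 0 with hT | hT
    · rw [Set.Ioc_eq_empty (by exact fun h => absurd (h.trans_le hT) (lt_irrefl 0))]
      exact integrableOn_empty
    · apply IntegrableOn.mono_set _ Set.Ioc_subset_Icc_self
      apply ContinuousOn.integrableOn_Icc
      exact φ.continuous.comp_continuousOn
        (hγc.mono (Set.Icc_subset_Ici_self : Set.Icc (0:ℝ) T ⊆ Set.Ici 0))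
  -- integrability over the circle
  have hIntμ : ∀ φ : C(UnitAddCircle, ℂ), Integrable (fun x => φ x)
      (volume : Measure UnitAddCircle) := by
    intro φ
    refine (integrable_const (‖φ‖ : ℝ)).mono' φ.continuous.aestronglyMeasurable ?_
    exact Eventually.of_forall fun x => φ.norm_coe_le_norm x
  set S : Set C(UnitAddCircle, ℂ) := {φ |
    Tendsto (fun T : ℝ => (1 / T) • ∫ t in Set.Ioc (0 : ℝ) T, φ (γ t)) atTop
      (nhds (∫ x, φ x ∂(volume : Measure UnitAddCircle)))} with hS
  -- closure properties
  have hzero : (0 : C(UnitAddCircle, ℂ)) ∈ S := by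
    simp only [hS, Set.mem_setOf_eq, ContinuousMap.coe_zero, Pi.zero_apply,
      integral_zero, smul_zero]
    exact tendsto_const_nhds
  have hadd : ∀ φ ψ : C(UnitAddCircle, ℂ), φ ∈ S → ψ ∈ S → φ + ψ ∈ S := by
    intro φ ψ hφ hψ
    simp only [hS, Set.mem_setOf_eq] at *
    have heq : ∀ T : ℝ, (1 / T) • ∫ t in Set.Ioc (0 : ℝ) T, (φ + ψ) (γ t)
        = ((1 / T) • ∫ t in Set.Ioc (0 : ℝ) T, φ (γ t))
          + ((1 / T) • ∫ t in Set.Ioc (0 : ℝ) T, ψ (γ t)) := by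
      intro T
      rw [← smul_add, ← integral_add (hInt φ T) (hInt ψ T)]
      simp [ContinuousMap.add_apply]
    rw [show (∫ x, (φ + ψ) x ∂(volume : Measure UnitAddCircle))
      = (∫ x, φ x ∂(volume : Measure UnitAddCircle))
        + ∫ x, ψ x ∂(volume : Measure UnitAddCircle) by
        rw [← integral_add (hIntμ φ) (hIntμ ψ)]; simp [ContinuousMap.add_apply]]
    exact Tendsto.congr (fun T => (heq T).symm) (hφ.add hψ)
  have hsmul : ∀ (a : ℂ) (φ : C(UnitAddCircle, ℂ)), φ ∈ S → a • φ ∈ S := by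
    intro a φ hφ
    simp only [hS, Set.mem_setOf_eq] at *
    have heq : ∀ T : ℝ, (1 / T) • ∫ t in Set.Ioc (0 : ℝ) T, (a • φ) (γ t)
        = a • ((1 / T) • ∫ t in Set.Ioc (0 : ℝ) T, φ (γ t)) := by
      intro T
      rw [smul_comm]
      congr 1
      rw [← integral_smul]
      simp [ContinuousMap.smul_apply]
    rw [show (∫ x, (a • φ) x ∂(volume : Measure UnitAddCircle))
      = a • ∫ x, φ x ∂(volume : Measure UnitAddCircle) by
        rw [← integral_smul]; simp [ContinuousMap.smul_apply]]
    exact Tendsto.congr (fun T => (heq T).symm) (hφ.const_smul a)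
  -- S is closed
  have hclosed : IsClosed S := by
    apply IsSeqClosed.isClosed
    intro φj φ hmem hlim
    simp only [hS, Set.mem_setOf_eq] at hmem ⊢
    rw [Metric.tendsto_nhds]
    intro ε hε
    obtain ⟨j, hj⟩ : ∃ j, dist (φj j) φ < ε / 4 := by
      have := (Metric.tendsto_nhds.mp hlim) (ε / 4) (by linarith)
      exact this.exists
    have hkey : ∀ T : ℝ, 0 < T →
        dist ((1 / T) • ∫ t in Set.Ioc (0 : ℝ) T, φ (γ t))
          ((1 / T) • ∫ t in Set.Ioc (0 : ℝ) T, (φj j) (γ t)) ≤ ε / 4 := by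
      intro T hT
      rw [dist_eq_norm, ← smul_sub, ← integral_sub (hInt φ T) (hInt (φj j) T)]
      rw [norm_smul]
      have h1 : ‖∫ t in Set.Ioc (0:ℝ) T, (φ (γ t) - (φj j) (γ t))‖
          ≤ dist (φj j) φ * (volume (Set.Ioc (0:ℝ) T)).toReal := by
        apply norm_setIntegral_le_of_norm_le_const_ae
          (by rw [Real.volume_Ioc]; exact ENNReal.ofReal_lt_top)
        apply Eventually.of_forall
        intro t
        calc ‖φ (γ t) - (φj j) (γ t)‖ = ‖(φ - φj j) (γ t)‖ := by
              simp [ContinuousMap.sub_apply]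
          _ ≤ ‖φ - φj j‖ := (φ - φj j).norm_coe_le_norm _
          _ = dist (φj j) φ := by rw [dist_eq_norm]; rw [norm_sub_rev]
      calc ‖(1:ℝ) / T‖ * ‖∫ t in Set.Ioc (0:ℝ) T, (φ (γ t) - (φj j) (γ t))‖
          ≤ ‖(1:ℝ) / T‖ * (dist (φj j) φ * (volume (Set.Ioc (0:ℝ) T)).toReal) := by
            apply mul_le_mul_of_nonneg_left h1 (norm_nonneg _)
        _ = dist (φj j) φ := by
            rw [Real.norm_eq_abs, abs_of_pos (by positivity), Real.volume_Ioc,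
              ENNReal.toReal_ofReal (by linarith)]
            field_simp
            ring
        _ ≤ ε / 4 := hj.le
    have hdistμ : dist (∫ x, (φj j) x ∂(volume : Measure UnitAddCircle))
        (∫ x, φ x ∂(volume : Measure UnitAddCircle)) ≤ ε / 4 := by
      rw [dist_eq_norm, ← integral_sub (hIntμ (φj j)) (hIntμ φ)]
      have h2 := norm_integral_le_of_norm_le_const (μ := (volume : Measure UnitAddCircle))
        (C := dist (φj j) φ) (f := fun x => (φj j) x - φ x) ?_
      · calc ‖∫ x, ((φj j) x - φ x) ∂(volume : Measure UnitAddCircle)‖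
            ≤ dist (φj j) φ * ((volume : Measure UnitAddCircle) univ).toReal := h2
          _ = dist (φj j) φ := by rw [measure_univ]; simp
          _ ≤ ε / 4 := hj.le
      · apply Eventually.of_forall
        intro x
        calc ‖(φj j) x - φ x‖ = ‖(φj j - φ) x‖ := by simp [ContinuousMap.sub_apply]
          _ ≤ ‖φj j - φ‖ := (φj j - φ).norm_coe_le_norm _
          _ = dist (φj j) φ := (dist_eq_norm _ _).symm
    have hj2 := (Metric.tendsto_nhds.mp (hmem j)) (ε / 4) (by linarith)
    filter_upwards [hj2, eventually_gt_atTop (0:ℝ)] with T hT1 hT2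
    calc dist ((1 / T) • ∫ t in Set.Ioc (0 : ℝ) T, φ (γ t))
          (∫ x, φ x ∂(volume : Measure UnitAddCircle))
        ≤ dist ((1 / T) • ∫ t in Set.Ioc (0 : ℝ) T, φ (γ t))
            ((1 / T) • ∫ t in Set.Ioc (0 : ℝ) T, (φj j) (γ t))
          + dist ((1 / T) • ∫ t in Set.Ioc (0 : ℝ) T, (φj j) (γ t))
            (∫ x, (φj j) x ∂(volume : Measure UnitAddCircle))
          + dist (∫ x, (φj j) x ∂(volume : Measure UnitAddCircle))
            (∫ x, φ x ∂(volume : Measure UnitAddCircle)) := dist_triangle4 _ _ _ _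
      _ < ε / 4 + ε / 4 + ε / 4 := by
          apply add_lt_add_of_lt_of_le (add_lt_add_of_le_of_lt (hkey T hT2) hT1) hdistμ
      _ < ε := by linarith
  -- fourier monomials belong to S
  have hfourier : ∀ n : ℤ, (fourier n : C(UnitAddCircle, ℂ)) ∈ S := by
    intro n
    rcases eq_or_ne n 0 with rfl | hn
    · simp only [hS, Set.mem_setOf_eq]
      have h1 : ∀ x : UnitAddCircle, (fourier 0 : C(UnitAddCircle, ℂ)) x = 1 :=
        fun x => fourier_zero
      simp_rw [h1]
      rw [integral_const, probReal_univ]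
      simp only [ENNReal.toReal_one, one_smul]
      have h2 : ∀ᶠ T : ℝ in atTop, (1 / T) • ∫ (_t : ℝ) in Set.Ioc (0:ℝ) T, (1:ℂ) = 1 := by
        filter_upwards [eventually_gt_atTop (0:ℝ)] with T hT
        rw [integral_const, Measure.real, Measure.restrict_apply_univ, Real.volume_Ioc,
          ENNReal.toReal_ofReal (by linarith)]
        simp only [sub_zero, smul_eq_mul]  -- real smul complex
        rw [smul_smul]
        norm_num
        rw [inv_mul_cancel₀ (show (T:ℂ) ≠ 0 by exact_mod_cast hT.ne')]
      exact Tendsto.congr' (by filter_upwards [h2] with T hT using hT.symm) tendsto_const_nhds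
    · simp only [hS, Set.mem_setOf_eq]
      have h1 : ∀ t : ℝ, (fourier n : C(UnitAddCircle, ℂ)) (γ t)
          = Complex.exp ((2 * π * n : ℝ) * g t * Complex.I) := by
        intro t
        rw [hγ]
        simp only []
        rw [fourier_coe_apply]
        congr 1
        push_cast
        field_simp
      simp_rw [h1]
      have h2 : ∫ x, (fourier n : C(UnitAddCircle, ℂ)) x ∂(volume : Measure UnitAddCircle)
          = 0 := by
        rw [volume_eq_haar]
        exact integral_eq_zero_of_add_right_eq_neg
          (fourier_add_half_inv_index hn one_pos)
      rw [h2]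
      exact hchar n hn
  -- conclude by density
  intro φ
  have hspan : (Submodule.span ℂ (Set.range (@fourier 1)) : Set C(UnitAddCircle, ℂ)) ⊆ S := by
    intro ψ hψ
    induction hψ using Submodule.span_induction with
    | mem x hx => obtain ⟨n, rfl⟩ := hx; exact hfourier n
    | zero => exact hzero
    | add x y _ _ hx hy => exact hadd x y hx hy
    | smul a x _ hx => exact hsmul a x hx
  have htop : φ ∈ (Submodule.span ℂ (Set.range (@fourier 1))).topologicalClosure := by
    rw [span_fourier_closure_eq_top]
    trivial
  have hφS : φ ∈ S := by
    have h3 : φ ∈ closure (Submodule.span ℂ (Set.range (@fourier 1)) : Set _) :=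
      htop
    exact (closure_mono hspan).trans hclosed.closure_eq.subset h3
  exact hφS

end BMcudAux

/-- With probability one, the path of fractional parts `t ↦ ⟨B_t⟩` of a standard Brownian
motion is continuously uniformly distributed in `𝕋 = ℝ/ℤ` (whose normalized Haar measure
is `volume`). -/
theorem brownian_motion_fractional_parts_cud
    {Ω : Type*} [MeasurableSpace Ω]
    (P : Measure Ω) [IsProbabilityMeasure P]
    (B : ℝ → Ω → ℝ) (hB : IsStdBrownianMotion P B) :
    ∀ᵐ ω ∂P, IsCUD (volume : Measure UnitAddCircle) (fun t => (↑(B t ω) : UnitAddCircle)) := by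
  have hchar : ∀ᵐ ω ∂P, ∀ k : ℤ, k ≠ 0 → Tendsto (fun T : ℝ =>
      (1 / T) • ∫ t in Set.Ioc (0:ℝ) T,
        Complex.exp ((2 * Real.pi * k : ℝ) * B t ω * Complex.I)) atTop (nhds 0) := by
    rw [ae_all_iff]
    intro k
    rcases eq_or_ne k 0 with rfl | hk
    · exact Filter.Eventually.of_forall fun ω h => absurd rfl h
    · have hc : (2 * Real.pi * (k:ℝ)) ≠ 0 := by
        apply mul_ne_zero (mul_ne_zero two_ne_zero Real.pi_ne_zero)
        exact_mod_cast hk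
      filter_upwards [as_tendsto_char hB hc] with ω hω _ using hω
  filter_upwards [hchar, hB.cont] with ω h1 h2
  exact isCUD_of (fun t => B t ω) h2 h1
end
end

section
/- Let G be a metrizable compact group and let X = (X_t)_{t≥0} be a jointly measurable G-valued stochastic process with stationary and independent increments (properties (1) and (2) of a Lévy process, with joint measurability of (t,ω) ↦ X_t(ω) replacing the rcll path property). For t ≥ 0 let μ_t be the distribution of X₀⁻¹X_t. Then μ_t converges weakly to the Dirac measure ε_{e_G} at the identity as t ↓ 0; equivalently, for every ε > 0, μ_t({g ∈ G : d(e_G, g) > ε}) → 0 as t ↓ 0, where d is a translation-invariant metric on G. -/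
open MeasureTheory ProbabilityTheory Filter Topology


-- Lemma A: continuity of translation in L¹(ℝ)
lemma lemA {f : ℝ → ℝ} (hf : Integrable f) :
    Tendsto (fun u => ∫ s, |f (s + u) - f s|) (𝓝 0) (𝓝 0) := by
  rw [NormedAddCommGroup.tendsto_nhds_zero]
  intro ε hε
  obtain ⟨g, hgsupp, hgapprox, hgcont, hgint⟩ :=
    hf.exists_hasCompactSupport_integral_sub_le (by positivity : (0:ℝ) < ε/4)
  -- the middle term tends to 0
  have hmid : Tendsto (fun u => ∫ s, |g (s + u) - g s|) (𝓝 0) (𝓝 0) := by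
    obtain ⟨M, hM⟩ : ∃ M : ℝ, ∀ x, ‖g x‖ ≤ M := by
      obtain ⟨C, hC⟩ := (hgcont.norm.bddAbove_range_of_hasCompactSupport hgsupp.norm)
      exact ⟨C, fun x => hC (Set.mem_range_self x)⟩
    set K : Set ℝ := Metric.cthickening 1 (tsupport g) with hK
    have hKcomp : IsCompact K := hgsupp.cthickening
    have hmid0 : Tendsto (fun u => ∫ s, |g (s + u) - g s|) (𝓝 0)
        (𝓝 (∫ s, |g s - g s|)) := by
      apply tendsto_integral_filter_of_dominated_convergence
        (K.indicator (fun _ => 2 * M))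
      · filter_upwards with u
        exact ((hgcont.comp (continuous_id.add continuous_const)).sub
          hgcont).abs.aestronglyMeasurable
      · filter_upwards [eventually_abs_sub_lt (0:ℝ) one_pos] with u hu
        filter_upwards with s
        by_cases hs : s ∈ K
        · rw [Set.indicator_of_mem hs]
          calc ‖|g (s + u) - g s|‖ = |g (s+u) - g s| := by rw [Real.norm_eq_abs, abs_abs]
          _ ≤ ‖g (s+u)‖ + ‖g s‖ := by
              rw [Real.norm_eq_abs, Real.norm_eq_abs]; exact abs_sub _ _
          _ ≤ 2*M := by nlinarith [hM (s+u), hM s]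
        · rw [Set.indicator_of_notMem hs]
          have h1 : s ∉ tsupport g := fun h => hs (Metric.self_subset_cthickening _ h)
          have h2 : s + u ∉ tsupport g := by
            intro h
            apply hs
            apply Metric.mem_cthickening_of_dist_le s (s+u) 1 _ h
            simp only [dist_self_add_right, Real.norm_eq_abs]
            simpa using hu.le
          rw [image_eq_zero_of_notMem_tsupport h1, image_eq_zero_of_notMem_tsupport h2]
          simp
      · exact (integrable_indicator_iff hKcomp.measurableSet).2
          (integrableOn_const hKcomp.measure_lt_top.ne enorm_ne_top)
      · filter_upwards with s
        have h3 : Tendsto (fun u : ℝ => g (s + u)) (𝓝 0) (𝓝 (g s)) := by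
          have := (hgcont.tendsto (s + 0)).comp
            ((tendsto_const_nhds.add tendsto_id) :
              Tendsto (fun u : ℝ => s + u) (𝓝 0) (𝓝 (s + 0)))
          simpa [Function.comp_def] using this
        exact (h3.sub tendsto_const_nhds).abs
    simpa using hmid0
  have hev := hmid (Metric.ball_mem_nhds (0:ℝ) (by positivity : (0:ℝ) < ε/4))
  filter_upwards [hev] with u hu
  simp only [Set.mem_preimage, Metric.mem_ball, Real.dist_eq, sub_zero] at hu
  have hfu : Integrable (fun s => f (s + u)) volume :=
    (measurePreserving_add_right volume u).integrable_comp hf.aestronglyMeasurable |>.2 hf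
  have hgu : Integrable (fun s => g (s + u)) volume :=
    (measurePreserving_add_right volume u).integrable_comp hgint.aestronglyMeasurable |>.2 hgint
  have i1 : Integrable (fun s => |f (s+u) - g (s+u)|) volume := (hfu.sub hgu).abs
  have i2 : Integrable (fun s => |g (s+u) - g s|) volume := (hgu.sub hgint).abs
  have i3 : Integrable (fun s => |g s - f s|) volume := (hgint.sub hf).abs
  have key : ∫ s, |f (s + u) - f s| ≤ (∫ s, |f (s+u) - g (s+u)|) + (∫ s, |g (s+u) - g s|)
      + ∫ s, |g s - f s| := by
    have i12 : Integrable (fun s => |f (s+u) - g (s+u)| + |g (s+u) - g s|) volume := i1.add i2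
    have i123 : Integrable (fun s => |f (s+u) - g (s+u)| + |g (s+u) - g s| + |g s - f s|)
      volume := i12.add i3
    calc ∫ s, |f (s + u) - f s|
        ≤ ∫ s, (|f (s+u) - g (s+u)| + |g (s+u) - g s| + |g s - f s|) := ?_
      _ = (∫ s, |f (s+u) - g (s+u)|) + (∫ s, |g (s+u) - g s|) + ∫ s, |g s - f s| := by
          rw [integral_add i12 i3, integral_add i1 i2]
    apply integral_mono (hfu.sub hf).abs i123
    intro s
    simp only
    calc |f (s+u) - f s| = |(f (s+u) - g (s+u)) + (g (s+u) - g s) + (g s - f s)| := by ring_nf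
    _ ≤ |(f (s+u) - g (s+u)) + (g (s+u) - g s)| + |g s - f s| := abs_add_le _ _
    _ ≤ |f (s+u) - g (s+u)| + |g (s+u) - g s| + |g s - f s| :=
      add_le_add_left (abs_add_le _ _) _
  have e1 : ∫ s, |f (s+u) - g (s+u)| = ∫ s, |f s - g s| :=
    integral_add_right_eq_self (fun s => |f s - g s|) u
  have e2 : ∫ s, |f s - g s| ≤ ε/4 := by
    calc ∫ s, |f s - g s| = ∫ s, ‖f s - g s‖ := by simp [Real.norm_eq_abs]
    _ ≤ ε/4 := hgapprox
  have e3 : ∫ s, |g s - f s| ≤ ε/4 := by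
    calc ∫ s, |g s - f s| = ∫ s, ‖f s - g s‖ := by simp [Real.norm_eq_abs, abs_sub_comm]
    _ ≤ ε/4 := hgapprox
  have hnn : 0 ≤ ∫ s, |f (s + u) - f s| := integral_nonneg (fun s => abs_nonneg _)
  rw [Real.norm_eq_abs, abs_of_nonneg hnn]
  have h5 := le_abs_self (∫ s, |g (s+u) - g s|)
  linarith



-- Lemma A': version on [0,1] for bounded measurable functions
lemma lemA' {f : ℝ → ℝ} (hf : Measurable f) (hb : ∀ s, |f s| ≤ 1) :
    Tendsto (fun u => ∫ s in Set.Icc (0:ℝ) 1, |f (s + u) - f s|) (𝓝 0) (𝓝 0) := by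
  set F : ℝ → ℝ := (Set.Icc (-1:ℝ) 2).indicator f with hF
  have hFint : Integrable F volume := by
    rw [hF, integrable_indicator_iff measurableSet_Icc]
    exact Integrable.mono'
      (integrableOn_const (by rw [Real.volume_Icc]; exact ENNReal.ofReal_ne_top) enorm_ne_top)
      hf.aestronglyMeasurable.restrict
      (ae_of_all _ fun s => by simpa [Real.norm_eq_abs] using hb s)
  have hmain := lemA hFint
  apply tendsto_of_tendsto_of_tendsto_of_le_of_le' tendsto_const_nhds hmain
  · filter_upwards with u
    exact setIntegral_nonneg measurableSet_Icc fun s _ => abs_nonneg _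
  · filter_upwards [eventually_abs_sub_lt (0:ℝ) one_pos] with u hu
    rw [sub_zero] at hu
    have heq : ∀ s ∈ Set.Icc (0:ℝ) 1, |f (s + u) - f s| = |F (s + u) - F s| := by
      intro s hs
      obtain ⟨hs0, hs1⟩ := hs
      have h1 : F s = f s := Set.indicator_of_mem (by constructor <;> linarith) f
      have h2 : F (s + u) = f (s + u) := by
        apply Set.indicator_of_mem _ f
        have := abs_le.1 hu.le
        constructor <;> [linarith [this.1]; linarith [this.2]]
      rw [h1, h2]
    calc ∫ s in Set.Icc (0:ℝ) 1, |f (s + u) - f s|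
        = ∫ s in Set.Icc (0:ℝ) 1, |F (s + u) - F s| :=
          setIntegral_congr_fun measurableSet_Icc heq
      _ ≤ ∫ s, |F (s + u) - F s| := by
          apply setIntegral_le_integral
          · have : Integrable (fun s => F (s + u)) volume :=
              (measurePreserving_add_right volume u).integrable_comp
                hFint.aestronglyMeasurable |>.2 hFint
            exact (this.sub hFint).abs
          · exact ae_of_all _ fun s => abs_nonneg _

-- net lemma
lemma net_bound {G : Type*} [MetricSpace G] [CompactSpace G] {δ : ℝ} (hδ : 0 < δ) :
    ∃ T : Finset G, ∀ x y : G, min (dist x y) 1 ≤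
      δ + 2 * ∑ c ∈ T, |max (1 - (2/δ) * dist x c) 0 - max (1 - (2/δ) * dist y c) 0| := by
  obtain ⟨t, htfin, htcover⟩ := (Metric.totallyBounded_iff.1
    ((isCompact_univ : IsCompact (Set.univ : Set G)).totallyBounded)) (δ/4) (by positivity)
  refine ⟨htfin.toFinset, fun x y => ?_⟩
  set f : G → G → ℝ := fun c x => max (1 - (2/δ) * dist x c) 0 with hf
  have hsumnn : (0:ℝ) ≤ ∑ c ∈ htfin.toFinset, |f c x - f c y| :=
    Finset.sum_nonneg fun c _ => abs_nonneg _
  rcases le_or_gt (dist x y) δ with hle | hlt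
  · calc min (dist x y) 1 ≤ dist x y := min_le_left _ _
      _ ≤ δ + 2 * ∑ c ∈ htfin.toFinset, |f c x - f c y| := by linarith
  · obtain ⟨c, hc, hxc⟩ : ∃ c ∈ htfin.toFinset, dist x c < δ/4 := by
      have := htcover (Set.mem_univ x)
      simp only [Set.mem_iUnion, Metric.mem_ball] at this
      obtain ⟨c, hc1, hc2⟩ := this
      exact ⟨c, htfin.mem_toFinset.2 hc1, hc2⟩
    have hfx : (1:ℝ)/2 ≤ f c x := by
      rw [hf]
      have h1 : (2/δ) * dist x c ≤ (2/δ) * (δ/4) :=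
        mul_le_mul_of_nonneg_left hxc.le (by positivity)
      have h2 : (2/δ) * (δ/4) = 1/2 := by field_simp; ring
      exact le_max_iff.2 (Or.inl (by linarith))
    have hfy : f c y = 0 := by
      rw [hf]
      have htri := dist_triangle x c y
      have hcy : dist c y = dist y c := dist_comm c y
      have hyc : δ/2 ≤ dist y c := by linarith
      have h3 : (2/δ) * (δ/2) ≤ (2/δ) * dist y c :=
        mul_le_mul_of_nonneg_left hyc (by positivity)
      have h4 : (2/δ) * (δ/2) = 1 := by field_simp
      simp only [max_eq_right_iff]
      linarith
    have hterm : (1:ℝ)/2 ≤ |f c x - f c y| := by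
      rw [hfy, sub_zero, abs_of_nonneg (le_max_right _ _)]
      exact hfx
    have hsum : (1:ℝ)/2 ≤ ∑ c' ∈ htfin.toFinset, |f c' x - f c' y| :=
      le_trans hterm (Finset.single_le_sum (f := fun c' => |f c' x - f c' y|)
        (fun c' _ => abs_nonneg _) hc)
    calc min (dist x y) 1 ≤ 1 := min_le_right _ _
      _ ≤ δ + 2 * ∑ c' ∈ htfin.toFinset, |f c' x - f c' y| := by linarith



lemma keylem {Ω G : Type*} [MeasurableSpace Ω] [MeasurableSpace G] [MetricSpace G]
    (P : Measure Ω) [IsProbabilityMeasure P] (X : ℝ → Ω → G)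
    (hjm : Measurable fun p : ℝ × Ω => X p.1 p.2)
    (φ : G → ℝ) (hφ : Measurable φ) (hb : ∀ g, |φ g| ≤ 1) :
    Tendsto (fun u => ∫ ω, (∫ s in Set.Icc (0:ℝ) 1, |φ (X (s + u) ω) - φ (X s ω)|) ∂P)
      (𝓝[>] (0:ℝ)) (𝓝 0) := by
  have hXsec : ∀ ω, Measurable fun s => X s ω := fun ω =>
    hjm.comp (measurable_id.prodMk measurable_const)
  have hXsec' : ∀ s, Measurable fun ω => X s ω := fun s =>
    hjm.comp (measurable_const.prodMk measurable_id)
  have hIcc : volume (Set.Icc (0:ℝ) 1) = 1 := by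
    rw [Real.volume_Icc]; norm_num
  have hmeas : ∀ u : ℝ, Measurable fun p : Ω × ℝ => |φ (X (p.2 + u) p.1) - φ (X p.2 p.1)| := by
    intro u
    apply Measurable.abs
    apply Measurable.sub
    · exact (hφ.comp hjm).comp ((measurable_snd.add_const u).prodMk measurable_fst)
    · exact (hφ.comp hjm).comp (measurable_snd.prodMk measurable_fst)
  have h0 : Tendsto (fun u => ∫ ω, (∫ s in Set.Icc (0:ℝ) 1, |φ (X (s + u) ω) - φ (X s ω)|) ∂P)
      (𝓝[>] (0:ℝ)) (𝓝 (∫ ω, (0:ℝ) ∂P)) := by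
    apply tendsto_integral_filter_of_dominated_convergence (fun _ => (2:ℝ))
    · filter_upwards with u
      exact ((hmeas u).stronglyMeasurable.integral_prod_right').aestronglyMeasurable
    · filter_upwards with u
      filter_upwards with ω
      calc ‖∫ s in Set.Icc (0:ℝ) 1, |φ (X (s + u) ω) - φ (X s ω)|‖
          ≤ 2 * (volume (Set.Icc (0:ℝ) 1)).toReal := by
            apply norm_setIntegral_le_of_norm_le_const
            · rw [hIcc]; exact ENNReal.one_lt_top
            · intro s _
              rw [Real.norm_eq_abs, abs_abs]
              calc |φ (X (s + u) ω) - φ (X s ω)| ≤ |φ (X (s + u) ω)| + |φ (X s ω)| :=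
                abs_sub _ _
               _ ≤ 2 := by linarith [hb (X (s+u) ω), hb (X s ω)]
          _ = 2 := by rw [hIcc]; simp
    · exact integrable_const 2
    · filter_upwards with ω
      have := lemA' (f := fun s => φ (X s ω)) (hφ.comp (hXsec ω)) (fun s => hb _)
      exact this.mono_left nhdsWithin_le_nhds
  simpa using h0



/-- Let `G` be a metrizable compact group, realized as a compact metric group whose
metric `d` is translation-invariant, and let `X` be a jointly measurable `G`-valued
process with stationary and independent increments. Then the distribution `μ_t` of
`X₀⁻¹ X_t` converges weakly to the Dirac measure at the identity as `t ↓ 0`;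
equivalently, for every `ε > 0`, `μ_t {g : d(e_G, g) > ε} → 0` as `t ↓ 0`. -/
theorem increments_tendsto_dirac
    {Ω G : Type*} [MeasurableSpace Ω]
    [Group G] [MetricSpace G] [IsTopologicalGroup G] [CompactSpace G]
    [MeasurableSpace G] [BorelSpace G]
    -- the metric is translation-invariant:
    (hinvL : ∀ g x y : G, dist (g * x) (g * y) = dist x y)
    (hinvR : ∀ g x y : G, dist (x * g) (y * g) = dist x y)
    (P : Measure Ω) [IsProbabilityMeasure P]
    (X : ℝ → Ω → G)
    -- joint measurability of `(t, ω) ↦ X_t(ω)`: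
    (hjm : Measurable fun p : ℝ × Ω => X p.1 p.2)
    -- stationary increments:
    (hstat : ∀ t₁ t₂ : ℝ, 0 ≤ t₁ → t₁ < t₂ →
      P.map (fun ω => (X t₁ ω)⁻¹ * X t₂ ω) = P.map (fun ω => (X 0 ω)⁻¹ * X (t₂ - t₁) ω))
    -- independent increments:
    (hind : ∀ (n : ℕ) (t : Fin (n + 1) → ℝ), 0 ≤ t 0 → StrictMono t →
      iIndepFun (β := fun _ => G)
        (fun i : Fin (n + 1) =>
          Fin.cases (fun ω => X (t 0) ω)
            (fun j (ω : Ω) => (X (t j.castSucc) ω)⁻¹ * X (t j.succ) ω) i) P)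
    (μ : ℝ → Measure G)
    (hμ : ∀ t : ℝ, 0 ≤ t → μ t = P.map fun ω => (X 0 ω)⁻¹ * X t ω) :
    ∀ ε : ℝ, 0 < ε →
      Tendsto (fun t => μ t {g : G | ε < dist (1 : G) g})
        (nhdsWithin 0 (Set.Ioi 0)) (nhds 0) := by
  intro ε hε
  -- measurability preliminaries
  have hXsec' : ∀ t : ℝ, Measurable (X t) := fun t =>
    hjm.comp (measurable_const.prodMk measurable_id)
  have hY : ∀ t : ℝ, Measurable fun ω => (X 0 ω)⁻¹ * X t ω := fun t =>
    ((hXsec' 0).inv).mul (hXsec' t)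
  have hGc : Continuous fun g : G => min (dist (1:G) g) 1 :=
    (continuous_const.dist continuous_id).min continuous_const
  -- the basic quantity
  set h : ℝ → ℝ := fun t => ∫ ω, min (dist (1:G) ((X 0 ω)⁻¹ * X t ω)) 1 ∂P with hhdef
  have hint : ∀ t : ℝ, Integrable (fun ω => min (dist (1:G) ((X 0 ω)⁻¹ * X t ω)) 1) P := by
    intro t
    apply Integrable.mono' (integrable_const (1:ℝ))
      (hGc.measurable.comp (hY t)).aestronglyMeasurable
    filter_upwards with ω
    simp only [Function.comp_apply]
    rw [Real.norm_eq_abs, abs_of_nonneg (le_min dist_nonneg zero_le_one)]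
    exact min_le_right _ _
  have hhnn : ∀ t, 0 ≤ h t := fun t =>
    integral_nonneg fun ω => le_min dist_nonneg zero_le_one
  -- stationarity in the form we need
  have hstat' : ∀ s u : ℝ, 0 ≤ s → 0 < u →
      (∫ ω, min (dist (X s ω) (X (s+u) ω)) 1 ∂P) = h u := by
    intro s u hs hu
    have hZs : Measurable fun ω => (X s ω)⁻¹ * X (s+u) ω := ((hXsec' s).inv).mul (hXsec' _)
    have e : (fun ω => min (dist (X s ω) (X (s+u) ω)) 1)
        = fun ω => min (dist (1:G) ((X s ω)⁻¹ * X (s+u) ω)) 1 := by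
      funext ω
      have h2 := hinvL (X s ω)⁻¹ (X s ω) (X (s+u) ω)
      rw [inv_mul_cancel] at h2
      rw [← h2]
    rw [e]
    have hsu : s + u - s = u := by ring
    calc ∫ ω, min (dist (1:G) ((X s ω)⁻¹ * X (s+u) ω)) 1 ∂P
        = ∫ g, min (dist (1:G) g) 1 ∂(P.map (fun ω => (X s ω)⁻¹ * X (s+u) ω)) :=
          (integral_map hZs.aemeasurable hGc.aestronglyMeasurable).symm
      _ = ∫ g, min (dist (1:G) g) 1 ∂(P.map (fun ω => (X 0 ω)⁻¹ * X u ω)) := by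
          rw [hstat s (s+u) hs (by linarith), hsu]
      _ = h u := integral_map (hY u).aemeasurable hGc.aestronglyMeasurable
  -- main convergence of h
  have htend : Tendsto h (𝓝[>] (0:ℝ)) (𝓝 0) := by
    rw [NormedAddCommGroup.tendsto_nhds_zero]
    intro ε' hε'
    set δ : ℝ := ε'/2 with hδdef
    have hδ : 0 < δ := by positivity
    obtain ⟨T, hT⟩ := net_bound (G := G) hδ
    set φ : G → G → ℝ := fun c x => max (1 - (2/δ) * dist x c) 0 with hφdef
    have hφm : ∀ c, Measurable (φ c) :=
      fun c => ((measurable_const.sub ((measurable_id.dist measurable_const).const_mul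
        (2/δ))).max measurable_const)
    have hφb : ∀ c x, |φ c x| ≤ 1 := by
      intro c x
      rw [abs_of_nonneg (le_max_right _ _)]
      apply max_le _ zero_le_one
      have : 0 ≤ (2/δ) * dist x c := by positivity
      linarith
    -- the key quantities
    set K : G → ℝ → ℝ := fun c u =>
      ∫ ω, (∫ s in Set.Icc (0:ℝ) 1, |φ c (X (s + u) ω) - φ c (X s ω)|) ∂P with hKdef
    have hKtend : Tendsto (fun u => 2 * ∑ c ∈ T, K c u) (𝓝[>] (0:ℝ)) (𝓝 0) := by
      have := tendsto_finset_sum T (fun c _ => keylem P X hjm (φ c) (hφm c) (hφb c))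
      have h2 := this.const_mul (2:ℝ)
      simpa using h2
    -- Fubini estimate: for every u > 0, h u ≤ δ + 2 * ∑ K c u
    have hmain : ∀ u : ℝ, 0 < u → h u ≤ δ + 2 * ∑ c ∈ T, K c u := by
      intro u hu
      haveI : IsProbabilityMeasure (volume.restrict (Set.Icc (0:ℝ) 1)) :=
        ⟨by rw [Measure.restrict_apply_univ, Real.volume_Icc]; norm_num⟩
      set ν : Measure (ℝ × Ω) := (volume.restrict (Set.Icc (0:ℝ) 1)).prod P with hνdef
      have m1 : Measurable fun p : ℝ × Ω => X p.1 p.2 := hjm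
      have m2 : Measurable fun p : ℝ × Ω => X (p.1 + u) p.2 :=
        hjm.comp ((measurable_fst.add_const u).prodMk measurable_snd)
      have mdist : Measurable fun p : ℝ × Ω => min (dist (X p.1 p.2) (X (p.1+u) p.2)) 1 :=
        (m1.dist m2).min measurable_const
      have int1 : Integrable (fun p : ℝ × Ω => min (dist (X p.1 p.2) (X (p.1+u) p.2)) 1) ν := by
        apply Integrable.mono' (integrable_const (1:ℝ)) mdist.aestronglyMeasurable
        filter_upwards with p
        rw [Real.norm_eq_abs, abs_of_nonneg (le_min dist_nonneg zero_le_one)]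
        exact min_le_right _ _
      have intc : ∀ c ∈ T, Integrable
          (fun p : ℝ × Ω => |φ c (X (p.1 + u) p.2) - φ c (X p.1 p.2)|) ν := by
        intro c _
        apply Integrable.mono' (integrable_const (2:ℝ))
        · exact (((hφm c).comp m2).sub ((hφm c).comp m1)).abs.aestronglyMeasurable
        · filter_upwards with p
          rw [Real.norm_eq_abs, abs_abs]
          calc |φ c (X (p.1+u) p.2) - φ c (X p.1 p.2)|
              ≤ |φ c (X (p.1+u) p.2)| + |φ c (X p.1 p.2)| := abs_sub _ _
            _ ≤ 2 := by linarith [hφb c (X (p.1+u) p.2), hφb c (X p.1 p.2)]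
      have intsum : Integrable (fun p : ℝ × Ω =>
          δ + 2 * ∑ c ∈ T, |φ c (X (p.1 + u) p.2) - φ c (X p.1 p.2)|) ν :=
        (integrable_const δ).add ((integrable_finset_sum T intc).const_mul 2)
      -- step 1 : ∫ over ν equals h u
      have step1 : (∫ p, min (dist (X p.1 p.2) (X (p.1+u) p.2)) 1 ∂ν) = h u := by
        calc (∫ p, min (dist (X p.1 p.2) (X (p.1+u) p.2)) 1 ∂ν)
            = ∫ s in Set.Icc (0:ℝ) 1, (∫ ω, min (dist (X s ω) (X (s+u) ω)) 1 ∂P) :=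
              integral_prod _ int1
          _ = ∫ s in Set.Icc (0:ℝ) 1, h u :=
              integral_congr_ae ((ae_restrict_iff' measurableSet_Icc).2
                (ae_of_all _ fun s hs => hstat' s u hs.1 hu))
          _ = h u := by simp
      -- step 2 : pointwise bound and integration
      have step2 : (∫ p, min (dist (X p.1 p.2) (X (p.1+u) p.2)) 1 ∂ν)
          ≤ ∫ p, (δ + 2 * ∑ c ∈ T, |φ c (X (p.1 + u) p.2) - φ c (X p.1 p.2)|) ∂ν := by
        apply integral_mono int1 intsum
        intro p
        calc min (dist (X p.1 p.2) (X (p.1+u) p.2)) 1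
            ≤ δ + 2 * ∑ c ∈ T, |φ c (X p.1 p.2) - φ c (X (p.1+u) p.2)| := hT _ _
          _ = δ + 2 * ∑ c ∈ T, |φ c (X (p.1+u) p.2) - φ c (X p.1 p.2)| := by
              rw [Finset.sum_congr rfl (fun c _ => abs_sub_comm _ _)]
      -- step 3 : compute the right-hand side
      have step3 : (∫ p, (δ + 2 * ∑ c ∈ T, |φ c (X (p.1 + u) p.2) - φ c (X p.1 p.2)|) ∂ν)
          = δ + 2 * ∑ c ∈ T, K c u := by
        rw [integral_add (integrable_const δ) ((integrable_finset_sum T intc).const_mul 2),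
          integral_const_mul, integral_finset_sum T intc]
        simp only [integral_const, probReal_univ, ENNReal.toReal_one, smul_eq_mul, one_mul]
        congr 2
        apply Finset.sum_congr rfl
        intro c hc
        exact integral_prod_symm _ (intc c hc)
      calc h u = ∫ p, min (dist (X p.1 p.2) (X (p.1+u) p.2)) 1 ∂ν := step1.symm
        _ ≤ ∫ p, (δ + 2 * ∑ c ∈ T, |φ c (X (p.1 + u) p.2) - φ c (X p.1 p.2)|) ∂ν := step2
        _ = δ + 2 * ∑ c ∈ T, K c u := step3
    -- conclude
    have hev : ∀ᶠ u in 𝓝[>] (0:ℝ), 2 * ∑ c ∈ T, K c u < ε'/2 :=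
      hKtend.eventually_lt_const (by positivity)
    filter_upwards [hev, self_mem_nhdsWithin] with u hu1 hu2
    rw [Real.norm_eq_abs, abs_of_nonneg (hhnn u)]
    have := hmain u hu2
    rw [hδdef] at this
    linarith
  -- Markov inequality and conclusion
  set m : ℝ := min ε 1 with hmdef
  have hm : 0 < m := lt_min hε one_pos
  have hSmeas : MeasurableSet {g : G | ε < dist (1:G) g} :=
    (isOpen_lt continuous_const (continuous_const.dist continuous_id)).measurableSet
  have hbound : ∀ t : ℝ, 0 < t →
      μ t {g : G | ε < dist (1:G) g} ≤ ENNReal.ofReal (h t / m) := by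
    intro t ht
    rw [hμ t ht.le, Measure.map_apply (hY t) hSmeas]
    have hsub : ((fun ω => (X 0 ω)⁻¹ * X t ω) ⁻¹' {g : G | ε < dist (1:G) g})
        ⊆ {ω | m ≤ min (dist (1:G) ((X 0 ω)⁻¹ * X t ω)) 1} := by
      intro ω hω
      simp only [Set.mem_preimage, Set.mem_setOf_eq] at hω ⊢
      exact le_min (le_trans (min_le_left ε 1) hω.le) (min_le_right ε 1)
    calc P ((fun ω => (X 0 ω)⁻¹ * X t ω) ⁻¹' {g : G | ε < dist (1:G) g})
        ≤ P {ω | m ≤ min (dist (1:G) ((X 0 ω)⁻¹ * X t ω)) 1} := measure_mono hsub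
      _ ≤ ENNReal.ofReal (h t / m) := by
          have hmarkov := mul_meas_ge_le_integral_of_nonneg
            (μ := P) (f := fun ω => min (dist (1:G) ((X 0 ω)⁻¹ * X t ω)) 1)
            (ae_of_all _ fun ω => le_min dist_nonneg zero_le_one) (hint t) m
          have hfin : P {ω | m ≤ min (dist (1:G) ((X 0 ω)⁻¹ * X t ω)) 1} ≠ ⊤ :=
            measure_ne_top _ _
          rw [← ENNReal.ofReal_toReal hfin]
          apply ENNReal.ofReal_le_ofReal
          rw [le_div_iff₀ hm, mul_comm]
          exact hmarkov
  have hup : Tendsto (fun t => ENNReal.ofReal (h t / m)) (𝓝[>] (0:ℝ)) (𝓝 0) := by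
    have h1 : Tendsto (fun t => h t / m) (𝓝[>] (0:ℝ)) (𝓝 0) := by
      simpa using htend.div_const m
    have h2 := (ENNReal.continuous_ofReal.tendsto 0).comp h1
    simpa [Function.comp_def] using h2
  apply tendsto_of_tendsto_of_tendsto_of_le_of_le' tendsto_const_nhds hup
  · filter_upwards with t using by simp
  · filter_upwards [self_mem_nhdsWithin] with t ht using hbound t ht
end
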